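/- Let H be a closed subset of the graph group G_F and let x, y ∈ G. If x ≤ y, then min(xH) ≤ min(yH), where min(xH) and min(yH) denote the unique minimal elements of the sets xH and yH with respect to ≤ (which exist since H is convex and translates of convex sets are convex). -/

import Mathlib

open Pointwise

namespace GraphGroupPaper

/-- The set of commutator relators: `gᵢ` and `gⱼ` commute for every pair of distinct
`i, j` with `{i,j} ∉ F`. -/
def Rels (k : ℕ) (F : Set (Sym2 (Fin k))) : Set (FreeGroup (Fin k)) :=
  {w | ∃ i j : Fin k, i ≠ j ∧ s(i, j) ∉ F ∧
      w = FreeGroup.of i * FreeGroup.of j * (FreeGroup.of i)⁻¹ * (FreeGroup.of j)⁻¹}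

/-- The graph group `G_F` with generators `g₁, …, g_k` and relations `gᵢgⱼ = gⱼgᵢ`
for all distinct `i, j` with `{i,j} ∉ F`. -/
abbrev Grp (k : ℕ) (F : Set (Sym2 (Fin k))) := PresentedGroup (Rels k F)

/-- The generator `gᵢ` of the graph group. -/
def gen (k : ℕ) (F : Set (Sym2 (Fin k))) (i : Fin k) : Grp k F :=
  PresentedGroup.of i

/-- The group element corresponding to a symbol: `(i, true)` stands for `gᵢ`,
`(i, false)` stands for `gᵢ⁻¹`. -/
def sym (k : ℕ) (F : Set (Sym2 (Fin k))) (α : Fin k × Bool) : Grp k F :=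
  if α.2 then gen k F α.1 else (gen k F α.1)⁻¹

/-- The product of the word `l` of symbols, as an element of the graph group. -/
def wordProd (k : ℕ) (F : Set (Sym2 (Fin k))) (l : List (Fin k × Bool)) : Grp k F :=
  (l.map (sym k F)).prod

/-- `|x|` : the length of a shortest word in the symbols representing `x`. -/
noncomputable def len {k : ℕ} {F : Set (Sym2 (Fin k))} (x : Grp k F) : ℕ :=
  sInf {n | ∃ l : List (Fin k × Bool), wordProd k F l = x ∧ l.length = n}

/-- The partial order on `G_F`:  `x ≤ y` iff `|y| = |x| + |x⁻¹y|`. -/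
def le {k : ℕ} {F : Set (Sym2 (Fin k))} (x y : Grp k F) : Prop :=
  len y = len x + len (x⁻¹ * y)

/-- `m` is the meet `x ∧ y` (greatest lower bound w.r.t. `le`). -/
def IsMeet {k : ℕ} {F : Set (Sym2 (Fin k))} (x y m : Grp k F) : Prop :=
  le m x ∧ le m y ∧ ∀ w, le w x → le w y → le w m

/-- `j` is the (finite) join `x ∨ y` (least upper bound w.r.t. `le`);
`x ∨ y` is finite iff such a `j` exists. -/
def IsJoin {k : ℕ} {F : Set (Sym2 (Fin k))} (x y j : Grp k F) : Prop :=
  le x j ∧ le y j ∧ ∀ w, le x w → le y w → le j w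

/-- `j` is the (finite) join of the set `S`. -/
def IsJoinSet {k : ℕ} {F : Set (Sym2 (Fin k))} (S : Set (Grp k F)) (j : Grp k F) : Prop :=
  (∀ s ∈ S, le s j) ∧ ∀ w, (∀ s ∈ S, le s w) → le j w

/-- `y` is a segment of `a` if `a = x·y·z` for some `x, z`. -/
def Segment {k : ℕ} {F : Set (Sym2 (Fin k))} (y a : Grp k F) : Prop :=
  ∃ x z, a = x * y * z ∧ len a = len x + len y + len z

/-- The left-invariant metric `dist(x,y) = |x⁻¹y|`. -/
noncomputable def dist {k : ℕ} {F : Set (Sym2 (Fin k))} (x y : Grp k F) : ℕ :=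
  len (x⁻¹ * y)

/-- A nonempty set `L` is convex if `x, z ∈ L` and `dist(x,y) + dist(y,z) = dist(x,z)`
imply `y ∈ L`. -/
def ConvexSet {k : ℕ} {F : Set (Sym2 (Fin k))} (L : Set (Grp k F)) : Prop :=
  L.Nonempty ∧ ∀ x z y : Grp k F, x ∈ L → z ∈ L →
    dist x y + dist y z = dist x z → y ∈ L

/-- An ideal: nonempty, downward closed, and closed under finite joins. -/
def IdealSet {k : ℕ} {F : Set (Sym2 (Fin k))} (I : Set (Grp k F)) : Prop :=
  I.Nonempty ∧ (∀ x ∈ I, ∀ y, le y x → y ∈ I) ∧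
    (∀ x ∈ I, ∀ y ∈ I, ∀ j, IsJoin x y j → j ∈ I)

/-- `H` is closed if both `H` and `H⁻¹` are ideals. -/
def ClosedSet {k : ℕ} {F : Set (Sym2 (Fin k))} (H : Set (Grp k F)) : Prop :=
  IdealSet H ∧ IdealSet H⁻¹

/-- `m` is a minimal element of `S` w.r.t. `le`. -/
def MinimalIn {k : ℕ} {F : Set (Sym2 (Fin k))} (S : Set (Grp k F)) (m : Grp k F) : Prop :=
  m ∈ S ∧ ∀ x ∈ S, le x m → x = m

/-- `l` is a reduced (i.e. shortest) word representing `x`. -/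
def MinWord {k : ℕ} {F : Set (Sym2 (Fin k))} (x : Grp k F) (l : List (Fin k × Bool)) : Prop :=
  wordProd k F l = x ∧ l.length = len x

open Classical in
/-- `#_α(x)`: the number of occurrences of the symbol `α` (not counting `α⁻¹`)
in a reduced word representing `x`. -/
noncomputable def symCount {k : ℕ} {F : Set (Sym2 (Fin k))} (α : Fin k × Bool)
    (x : Grp k F) : ℕ :=
  if h : ∃ l, MinWord x l then h.choose.count α else 0

/-- The symbol `α` occurs in `x`. -/
def Occurs {k : ℕ} {F : Set (Sym2 (Fin k))} (α : Fin k × Bool) (x : Grp k F) : Prop :=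
  0 < symCount α x

/-- `α` is a maximal symbol of `x`, i.e. `xα⁻¹ ≤ x`. -/
def MaxSym {k : ℕ} {F : Set (Sym2 (Fin k))} (α : Fin k × Bool) (x : Grp k F) : Prop :=
  le (x * (sym k F α)⁻¹) x

/-- A peak: an element with precisely one maximal symbol. -/
def IsPeak {k : ℕ} {F : Set (Sym2 (Fin k))} (p : Grp k F) : Prop :=
  ∃! α : Fin k × Bool, MaxSym α p

/-- An `α`-peak: a peak whose unique maximal symbol is `α`. -/
def AlphaPeak {k : ℕ} {F : Set (Sym2 (Fin k))} (α : Fin k × Bool) (p : Grp k F) : Prop :=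
  MaxSym α p ∧ ∀ β, MaxSym β p → β = α

/-- The set of generator indices occurring in `b`. -/
def Support {k : ℕ} {F : Set (Sym2 (Fin k))} (b : Grp k F) : Set (Fin k) :=
  {i | Occurs (i, true) b ∨ Occurs (i, false) b}

/-- `b` is connected: the generators occurring in `b` induce a connected subgraph of
the graph `([k], F)`. -/
def Conn {k : ℕ} {F : Set (Sym2 (Fin k))} (b : Grp k F) : Prop :=
  (SimpleGraph.induce (Support b) (SimpleGraph.fromEdgeSet F)).Connected

/-- `b` is cyclically reduced: `b ∧ b⁻¹ = 1`. -/
def CycRed {k : ℕ} {F : Set (Sym2 (Fin k))} (b : Grp k F) : Prop :=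
  IsMeet b b⁻¹ 1

variable {k : ℕ} {F : Set (Sym2 (Fin k))}

/-! ### Part A: basics -/

variable {k : ℕ} {F : Set (Sym2 (Fin k))}

/-- symbol inverse -/
def sinv (a : Fin k × Bool) : Fin k × Bool := (a.1, !a.2)

@[simp] lemma sinv_sinv (a : Fin k × Bool) : sinv (sinv a) = a := by
  cases a with | mk i b => cases b <;> rfl

@[simp] lemma sinv_fst (a : Fin k × Bool) : (sinv a).1 = a.1 := rfl

@[simp] lemma sym_sinv (a : Fin k × Bool) : sym k F (sinv a) = (sym k F a)⁻¹ := by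
  cases a with | mk i b => cases b <;> simp [sym, sinv]

lemma sinv_eq_iff {a b : Fin k × Bool} : sinv a = b ↔ a = sinv b := by
  constructor <;> rintro rfl <;> simp

@[simp] lemma wordProd_nil : wordProd k F ([] : List (Fin k × Bool)) = 1 := rfl

@[simp] lemma wordProd_cons (a : Fin k × Bool) (l : List (Fin k × Bool)) :
    wordProd k F (a :: l) = sym k F a * wordProd k F l := by
  simp [wordProd]

lemma wordProd_append (l₁ l₂ : List (Fin k × Bool)) :
    wordProd k F (l₁ ++ l₂) = wordProd k F l₁ * wordProd k F l₂ := by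
  simp [wordProd]

lemma wordProd_inv (l : List (Fin k × Bool)) :
    (wordProd k F l)⁻¹ = wordProd k F ((l.map sinv).reverse) := by
  induction l with
  | nil => simp
  | cons a t ih => simp [wordProd_append, ih]

lemma mk_freeGroup_mk (L : List (Fin k × Bool)) :
    PresentedGroup.mk (Rels k F) (FreeGroup.mk L) = wordProd k F L := by
  induction L with
  | nil => rw [← FreeGroup.one_eq_mk]; simp
  | cons a t ih =>
    have : (a :: t) = [a] ++ t := rfl
    rw [this, ← FreeGroup.mul_mk, map_mul, ih]
    rw [wordProd_append]
    congr 1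
    cases a with | mk i b =>
    cases b
    · have : FreeGroup.mk [((i : Fin k), false)] = (FreeGroup.of i)⁻¹ := by
        show _ = (FreeGroup.mk [((i : Fin k), true)])⁻¹
        rw [FreeGroup.inv_mk]
        simp [FreeGroup.invRev]
      rw [this, map_inv]
      simp [sym, gen, PresentedGroup.of]
    · have : FreeGroup.mk [((i : Fin k), true)] = FreeGroup.of i := rfl
      rw [this]
      simp [sym, gen, PresentedGroup.of]

lemma exists_word (x : Grp k F) : ∃ l : List (Fin k × Bool), wordProd k F l = x := by
  induction x using PresentedGroup.induction_on with
  | H z => exact ⟨z.toWord, by rw [← mk_freeGroup_mk]; congr 1; exact FreeGroup.mk_toWord⟩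

lemma len_set_nonempty (x : Grp k F) :
    {n | ∃ l : List (Fin k × Bool), wordProd k F l = x ∧ l.length = n}.Nonempty := by
  obtain ⟨l, hl⟩ := exists_word x
  exact ⟨l.length, l, hl, rfl⟩

lemma exists_minWord (x : Grp k F) :
    ∃ l : List (Fin k × Bool), wordProd k F l = x ∧ l.length = len x := by
  have := Nat.sInf_mem (len_set_nonempty x)
  obtain ⟨l, hl, hlen⟩ := this
  exact ⟨l, hl, hlen⟩

lemma len_le {x : Grp k F} {l : List (Fin k × Bool)} (h : wordProd k F l = x) :
    len x ≤ l.length :=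
  Nat.sInf_le ⟨l, h, rfl⟩

@[simp] lemma len_one : len (1 : Grp k F) = 0 :=
  Nat.le_zero.mp (len_le (wordProd_nil))

lemma len_eq_zero {x : Grp k F} : len x = 0 ↔ x = 1 := by
  constructor
  · intro h
    obtain ⟨l, hl, hlen⟩ := exists_minWord x
    rw [h] at hlen
    rw [List.length_eq_zero_iff] at hlen
    rw [hlen] at hl
    simpa using hl.symm
  · rintro rfl; simp

lemma len_mul_le (x y : Grp k F) : len (x * y) ≤ len x + len y := by
  obtain ⟨lx, hx, hx'⟩ := exists_minWord x
  obtain ⟨ly, hy, hy'⟩ := exists_minWord y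
  have : wordProd k F (lx ++ ly) = x * y := by rw [wordProd_append, hx, hy]
  calc len (x * y) ≤ (lx ++ ly).length := len_le this
    _ = len x + len y := by simp [hx', hy']

@[simp] lemma len_inv (x : Grp k F) : len x⁻¹ = len x := by
  have key : ∀ y : Grp k F, len y⁻¹ ≤ len y := by
    intro y
    obtain ⟨l, hl, hlen⟩ := exists_minWord y
    have : wordProd k F ((l.map sinv).reverse) = y⁻¹ := by rw [← wordProd_inv, hl]
    calc len y⁻¹ ≤ ((l.map sinv).reverse).length := len_le this
      _ = len y := by simp [hlen]
  exact Nat.le_antisymm (key x) (by simpa using key x⁻¹)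

lemma len_triangle (x y : Grp k F) : len y ≤ len x + len (x⁻¹ * y) := by
  have := len_mul_le x (x⁻¹ * y)
  simpa using this

/-! parity -/

lemma commutator_eq_one {G : Type*} [CommGroup G] (a b : G) : a * b * a⁻¹ * b⁻¹ = 1 := by
  rw [mul_comm a b]; group

lemma rels_liftcheck {G : Type*} [CommGroup G] (f : Fin k → G) :
    ∀ r ∈ Rels k F, FreeGroup.lift f r = 1 := by
  rintro r ⟨i, j, -, -, rfl⟩
  simp only [map_mul, map_inv, FreeGroup.lift_apply_of]
  exact commutator_eq_one _ _

noncomputable def eps : Grp k F →* Multiplicative (ZMod 2) :=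
  PresentedGroup.toGroup (f := fun _ : Fin k => Multiplicative.ofAdd (1 : ZMod 2))
    (rels_liftcheck _)

@[simp] lemma eps_sym (a : Fin k × Bool) :
    eps (sym k F a) = Multiplicative.ofAdd (1 : ZMod 2) := by
  cases a with | mk i b =>
  cases b
  · show eps ((gen k F i)⁻¹) = _
    rw [map_inv]
    have : eps (gen k F i) = Multiplicative.ofAdd (1 : ZMod 2) :=
      PresentedGroup.toGroup.of _
    rw [this]; decide
  · exact PresentedGroup.toGroup.of _

lemma eps_wordProd (l : List (Fin k × Bool)) :
    eps (wordProd k F l) = Multiplicative.ofAdd ((l.length : ZMod 2)) := by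
  induction l with
  | nil => simp
  | cons a t ih =>
    rw [wordProd_cons, map_mul, eps_sym, ih]
    rw [← ofAdd_add]
    congr 1
    simp only [List.length_cons]
    push_cast
    ring

lemma len_parity {x : Grp k F} {l : List (Fin k × Bool)} (h : wordProd k F l = x) :
    ((l.length : ZMod 2)) = ((len x : ZMod 2)) := by
  obtain ⟨m, hm, hmlen⟩ := exists_minWord x
  have h1 := eps_wordProd (k := k) (F := F) l
  have h2 := eps_wordProd (k := k) (F := F) m
  rw [h] at h1; rw [hm] at h2
  have := h1.symm.trans h2
  have := Multiplicative.ofAdd.injective this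
  rw [this, hmlen]

lemma len_parity_mul (x y : Grp k F) :
    ((len (x * y) : ZMod 2)) = ((len x + len y : ℕ) : ZMod 2) := by
  obtain ⟨lx, hx, hx'⟩ := exists_minWord x
  obtain ⟨ly, hy, hy'⟩ := exists_minWord y
  have : wordProd k F (lx ++ ly) = x * y := by rw [wordProd_append, hx, hy]
  have := len_parity this
  rw [← this]
  simp [hx', hy']

lemma len_sym_mul_ne (a : Fin k × Bool) (x : Grp k F) :
    len (sym k F a * x) ≠ len x := by
  intro h
  have hp := len_parity_mul (sym k F a) x
  rw [h] at hp
  have hs : len (sym k F a) ≤ 1 := len_le (x := sym k F a) (l := [a]) (by simp)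
  have hs0 : len (sym k F a) ≠ 0 := by
    intro h0
    rw [len_eq_zero] at h0
    have := eps_sym (k := k) (F := F) a
    rw [h0, map_one] at this
    have := Multiplicative.ofAdd.injective this.symm
    simp at this
  have h1 : len (sym k F a) = 1 := by omega
  rw [h1] at hp
  push_cast at hp
  rw [right_eq_add] at hp
  exact one_ne_zero hp

lemma len_sym_mul (a : Fin k × Bool) (x : Grp k F) :
    len (sym k F a * x) = len x + 1 ∨ len x = len (sym k F a * x) + 1 := by
  have h1 : len (sym k F a * x) ≤ len (sym k F a) + len x := len_mul_le _ _
  have h2 : len x ≤ len (sym k F a) + len (sym k F a * x) := by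
    have := len_mul_le (sym k F a)⁻¹ (sym k F a * x)
    simpa [mul_assoc, len_inv] using this
  have hs : len (sym k F a) ≤ 1 := len_le (x := sym k F a) (l := [a]) (by simp)
  have := len_sym_mul_ne a x
  omega

/-! abelianization facts -/

noncomputable def ab : Grp k F →* Multiplicative (Fin k → ℤ) :=
  PresentedGroup.toGroup (f := fun i => Multiplicative.ofAdd (Pi.single i 1))
    (rels_liftcheck _)

lemma ab_gen (i : Fin k) : ab (gen k F i) = Multiplicative.ofAdd (Pi.single i 1) :=
  PresentedGroup.toGroup.of _

lemma ab_sym (a : Fin k × Bool) :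
    ab (sym k F a) = Multiplicative.ofAdd (Pi.single a.1 (if a.2 then (1:ℤ) else -1)) := by
  cases a with | mk i b =>
  cases b
  · show ab ((gen k F i)⁻¹) = _
    rw [map_inv, ab_gen, ← ofAdd_neg]
    congr 1
    ext x
    by_cases hx : x = i
    · subst hx; simp
    · simp [Pi.single_eq_of_ne hx]
  · show ab (gen k F i) = _
    rw [ab_gen]
    norm_num

lemma sym_ne_one (a : Fin k × Bool) : sym k F a ≠ 1 := by
  intro h
  have h2 : ab (sym k F a) = 1 := by rw [h, map_one]
  rw [ab_sym] at h2
  have := Multiplicative.ofAdd.injective (h2.trans (ofAdd_zero).symm)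
  have := congrFun this a.1
  rw [Pi.single_eq_same, Pi.zero_apply] at this
  split at this <;> omega

lemma len_sym (a : Fin k × Bool) : len (sym k F a) = 1 := by
  have hs : len (sym k F a) ≤ 1 := len_le (x := sym k F a) (l := [a]) (by simp)
  have hs0 : len (sym k F a) ≠ 0 := fun h => sym_ne_one a (len_eq_zero.mp h)
  omega

lemma sym_mul_sym_eq_one {a b : Fin k × Bool} (h : sym k F a * sym k F b = 1) :
    b = sinv a := by
  have h2 : ab (sym k F a) * ab (sym k F b) = 1 := by rw [← map_mul, h, map_one]
  cases a with | mk i s =>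
  cases b with | mk j t =>
  rw [ab_sym, ab_sym, ← ofAdd_add] at h2
  have key := Multiplicative.ofAdd.injective (h2.trans (ofAdd_zero).symm)
  have hij : j = i := by
    by_contra hne
    have := congrFun key i
    simp only [Pi.add_apply] at this
    rw [Pi.single_eq_same, Pi.single_eq_of_ne (Ne.symm hne)] at this
    rcases s <;> simp at this
  subst hij
  have := congrFun key j
  simp only [Pi.add_apply, Pi.single_eq_same] at this
  rcases s <;> rcases t <;> simp_all [sinv]

/-! order basics -/

lemma le_rfl' (x : Grp k F) : le x x := by simp [le]

lemma one_le' (x : Grp k F) : le 1 x := by simp [le]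

lemma le_one_iff {x : Grp k F} : le x 1 ↔ x = 1 := by
  constructor
  · intro h
    unfold le at h
    simp only [len_one] at h
    exact len_eq_zero.mp (by omega)
  · rintro rfl; exact le_rfl' 1

lemma le_len_le {x y : Grp k F} (h : le x y) : len x ≤ len y := by
  unfold le at h; omega

lemma len_quot {x y : Grp k F} (h : le x y) : len (x⁻¹ * y) = len y - len x := by
  unfold le at h; omega

lemma le_trans' {x y z : Grp k F} (h1 : le x y) (h2 : le y z) : le x z := by
  unfold le at *
  have e : x⁻¹ * z = (x⁻¹ * y) * (y⁻¹ * z) := by group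
  have t1 : len (x⁻¹ * z) ≤ len (x⁻¹ * y) + len (y⁻¹ * z) := by
    rw [e]; exact len_mul_le _ _
  have t2 : len z ≤ len x + len (x⁻¹ * z) := len_triangle _ _
  omega

lemma le_antisymm' {x y : Grp k F} (h1 : le x y) (h2 : le y x) : x = y := by
  unfold le at *
  have : len (x⁻¹ * y) = 0 := by omega
  have := len_eq_zero.mp this
  exact inv_mul_eq_one.mp this

lemma le_iff_quot {x y : Grp k F} : le x y ↔ len y = len x + len (x⁻¹ * y) := Iff.rfl

/-! soft order lemmas -/

lemma prefix_cancel {c a b : Grp k F} (hca : le c a) (hab : le a b) :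
    le (c⁻¹ * a) (c⁻¹ * b) := by
  have hcb : le c b := le_trans' hca hab
  have e : (c⁻¹ * a)⁻¹ * (c⁻¹ * b) = a⁻¹ * b := by group
  show len (c⁻¹ * b) = len (c⁻¹ * a) + len ((c⁻¹ * a)⁻¹ * (c⁻¹ * b))
  rw [e, len_quot hca, len_quot hcb, len_quot hab]
  have := le_len_le hca
  have := le_len_le hab
  have := le_len_le hcb
  omega

lemma prefix_cancel_rev {c a b : Grp k F} (hca : le c a) (hcb : le c b)
    (h : le (c⁻¹ * a) (c⁻¹ * b)) : le a b := by
  unfold le at h ⊢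
  have e : (c⁻¹ * a)⁻¹ * (c⁻¹ * b) = a⁻¹ * b := by group
  rw [e, len_quot hca, len_quot hcb] at h
  have := le_len_le hca
  have := le_len_le hcb
  omega

lemma len_quot_inv {x y : Grp k F} (h : le x y) : len (y⁻¹ * x) = len y - len x := by
  rw [← len_inv]
  have e : (y⁻¹ * x)⁻¹ = x⁻¹ * y := by group
  rw [e, len_quot h]

lemma quot_antitone {c b x : Grp k F} (hcb : le c b) (hbx : le b x) :
    le (x⁻¹ * b) (x⁻¹ * c) := by
  have hcx : le c x := le_trans' hcb hbx
  have e : (x⁻¹ * b)⁻¹ * (x⁻¹ * c) = b⁻¹ * c := by group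
  show len (x⁻¹ * c) = len (x⁻¹ * b) + len ((x⁻¹ * b)⁻¹ * (x⁻¹ * c))
  have e2 : len (b⁻¹ * c) = len (c⁻¹ * b) := by
    rw [← len_inv]; congr 1; group
  have h1 : len (x⁻¹ * b) = len x - len b := len_quot_inv hbx
  have h2 : len (x⁻¹ * c) = len x - len c := len_quot_inv hcx
  rw [e, e2, len_quot hcb, h1, h2]
  have := le_len_le hcb
  have := le_len_le hbx
  omega

lemma len_compose {d v x : Grp k F} (hd : le d x) (hv : le v (d⁻¹ * x)) :
    len (d * v) = len d + len v := by
  have e1 : (d * v)⁻¹ * x = v⁻¹ * (d⁻¹ * x) := by group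
  have t1 : len x ≤ len (d * v) + len ((d * v)⁻¹ * x) := len_triangle _ _
  have t2 : len (d * v) ≤ len d + len v := len_mul_le _ _
  rw [e1, len_quot hv] at t1
  have h1 := len_quot hd
  have := le_len_le hd
  have := le_len_le hv
  unfold le at hv
  omega

lemma le_compose {d v x : Grp k F} (hd : le d x) (hv : le v (d⁻¹ * x)) :
    le (d * v) x := by
  have e1 : (d * v)⁻¹ * x = v⁻¹ * (d⁻¹ * x) := by group
  show len x = len (d * v) + len ((d * v)⁻¹ * x)
  rw [e1, len_quot hv, len_compose hd hv, len_quot hd]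
  have := le_len_le hd
  have := le_len_le hv
  unfold le at hd hv
  omega

lemma le_head_compose {d v x : Grp k F} (hd : le d x) (hv : le v (d⁻¹ * x)) :
    le d (d * v) := by
  show len (d * v) = len d + len (d⁻¹ * (d * v))
  have e : d⁻¹ * (d * v) = v := by group
  rw [e, len_compose hd hv]

lemma suffix_le {d b : Grp k F} (h : le d b) : le (b⁻¹ * d) b⁻¹ := by
  have e : (b⁻¹ * d)⁻¹ * b⁻¹ = d⁻¹ := by group
  show len b⁻¹ = len (b⁻¹ * d) + len ((b⁻¹ * d)⁻¹ * b⁻¹)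
  have e2 : len (b⁻¹ * d) = len (d⁻¹ * b) := by rw [← len_inv]; congr 1; group
  rw [e, e2, len_quot h, len_inv, len_inv]
  have := le_len_le h
  omega

/-! initial letters -/

def Init (a : Fin k × Bool) (x : Grp k F) : Prop := le (sym k F a) x

lemma init_len {a : Fin k × Bool} {x : Grp k F} (h : Init a x) :
    len ((sym k F a)⁻¹ * x) + 1 = len x := by
  unfold Init le at h
  rw [len_sym] at h
  omega

lemma init_of_len {a : Fin k × Bool} {x : Grp k F}
    (h : len ((sym k F a)⁻¹ * x) + 1 = len x) : Init a x := by
  show len x = len (sym k F a) + len ((sym k F a)⁻¹ * x)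
  rw [len_sym]; omega

lemma not_init_len {a : Fin k × Bool} {x : Grp k F} (h : ¬ Init a x) :
    len ((sym k F a)⁻¹ * x) = len x + 1 := by
  have e : (sym k F a)⁻¹ * x = sym k F (sinv a) * x := by rw [sym_sinv]
  rcases len_sym_mul (sinv a) x with h1 | h1
  · rw [e, h1]
  · exfalso; exact h (init_of_len (by rw [e]; omega))

lemma init_exists {x : Grp k F} (h : x ≠ 1) : ∃ a, Init a x := by
  obtain ⟨l, hl, hlen⟩ := exists_minWord x
  match l, hl, hlen with
  | [], hl, hlen => exact absurd hl.symm h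
  | a :: t, hl, hlen =>
    refine ⟨a, init_of_len ?_⟩
    have e : (sym k F a)⁻¹ * x = wordProd k F t := by
      rw [← hl, wordProd_cons]; group
    have h1 : len ((sym k F a)⁻¹ * x) ≤ t.length := by
      rw [e]; exact len_le rfl
    have h2 : len x ≤ len (sym k F a) + len ((sym k F a)⁻¹ * x) := by
      have := len_triangle (sym k F a) x
      simpa using this
    rw [len_sym] at h2
    simp only [List.length_cons] at hlen
    omega

lemma init_of_le {a : Fin k × Bool} {v x : Grp k F} (hv : le v x) (h : Init a v) :
    Init a x := le_trans' h hv

/-! commutation of symbols -/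

def scomm (F : Set (Sym2 (Fin k))) (a b : Fin k × Bool) : Prop :=
  a.1 ≠ b.1 ∧ s(a.1, b.1) ∉ F

lemma scomm_symm {a b : Fin k × Bool} (h : scomm F a b) : scomm F b a := by
  obtain ⟨h1, h2⟩ := h
  exact ⟨h1.symm, by rwa [Sym2.eq_swap]⟩

@[simp] lemma scomm_sinv_left {a b : Fin k × Bool} : scomm F (sinv a) b ↔ scomm F a b := Iff.rfl

@[simp] lemma scomm_sinv_right {a b : Fin k × Bool} : scomm F a (sinv b) ↔ scomm F a b := Iff.rfl

lemma gen_commute {i j : Fin k} (hij : i ≠ j) (hF : s(i, j) ∉ F) :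
    Commute (gen k F i) (gen k F j) := by
  have hr : (FreeGroup.of i * FreeGroup.of j * (FreeGroup.of i)⁻¹ * (FreeGroup.of j)⁻¹ :
      FreeGroup (Fin k)) ∈ Rels k F := ⟨i, j, hij, hF, rfl⟩
  have h1 : PresentedGroup.mk (Rels k F)
      (FreeGroup.of i * FreeGroup.of j * (FreeGroup.of i)⁻¹ * (FreeGroup.of j)⁻¹) = 1 := by
    show (QuotientGroup.mk _ : FreeGroup (Fin k) ⧸ Subgroup.normalClosure (Rels k F)) = 1
    rw [QuotientGroup.eq_one_iff]
    exact Subgroup.subset_normalClosure hr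
  rw [map_mul, map_mul, map_mul, map_inv, map_inv] at h1
  have : gen k F i * gen k F j * (gen k F i)⁻¹ * (gen k F j)⁻¹ = 1 := h1
  unfold Commute SemiconjBy
  have h2 : gen k F i * gen k F j * (gen k F i)⁻¹ = gen k F j := by
    have := mul_eq_one_iff_eq_inv.mp this
    rw [this]; group
  calc gen k F i * gen k F j = (gen k F i * gen k F j * (gen k F i)⁻¹) * gen k F i := by group
  _ = gen k F j * gen k F i := by rw [h2]

lemma sym_commute {a b : Fin k × Bool} (h : scomm F a b) :
    Commute (sym k F a) (sym k F b) := by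
  obtain ⟨h1, h2⟩ := h
  have base : Commute (gen k F a.1) (gen k F b.1) := gen_commute h1 h2
  cases a with | mk i s =>
  cases b with | mk j t =>
  cases s <;> cases t <;> simp only [sym, if_true, if_false] <;>
    first
      | exact base
      | exact base.inv_left
      | exact base.inv_right
      | exact base.inv_left.inv_right

lemma sym_mul_comm {a b : Fin k × Bool} (h : scomm F a b) :
    sym k F a * sym k F b = sym k F b * sym k F a := (sym_commute h).eq

/-! ### Part B: cancellation machinery -/

open scoped Classical

lemma scomm_ne {a b : Fin k × Bool} (h : scomm F a b) : b ≠ sinv a := by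
  intro he
  exact h.1 (by rw [he]; rfl)

lemma scomm_ne' {a b : Fin k × Bool} (h : scomm F a b) : a ≠ b := by
  intro he; exact h.1 (by rw [he])

noncomputable def cancel (F : Set (Sym2 (Fin k))) (a : Fin k × Bool) :
    List (Fin k × Bool) → Option (List (Fin k × Bool))
  | [] => none
  | b :: t =>
    if b = sinv a then some t
    else if scomm F a b then (cancel F a t).map (b :: ·) else none

@[simp] lemma cancel_nil (a : Fin k × Bool) : cancel F a [] = none := by rw [cancel]

lemma cancel_cons (a b : Fin k × Bool) (t : List (Fin k × Bool)) :
    cancel F a (b :: t) = if b = sinv a then some t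
      else if scomm F a b then (cancel F a t).map (b :: ·) else none := by
  rw [cancel]

lemma cancel_cons_inv (a : Fin k × Bool) (t : List (Fin k × Bool)) :
    cancel F a (sinv a :: t) = some t := by
  rw [cancel_cons, if_pos rfl]

lemma cancel_cons_eq (a b : Fin k × Bool) (t : List (Fin k × Bool)) (h : b = sinv a) :
    cancel F a (b :: t) = some t := by
  rw [cancel_cons, if_pos h]

lemma cancel_cons_comm {a b : Fin k × Bool} (t : List (Fin k × Bool))
    (h2 : scomm F a b) :
    cancel F a (b :: t) = (cancel F a t).map (b :: ·) := by
  rw [cancel_cons, if_neg (scomm_ne h2), if_pos h2]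

lemma cancel_cons_block {a b : Fin k × Bool} (t : List (Fin k × Bool))
    (h1 : b ≠ sinv a) (h2 : ¬ scomm F a b) :
    cancel F a (b :: t) = none := by
  rw [cancel_cons, if_neg h1, if_neg h2]

/-- decomposition induced by a successful cancellation -/
lemma cancel_decomp {a : Fin k × Bool} {l l' : List (Fin k × Bool)}
    (h : cancel F a l = some l') :
    ∃ p q, l = p ++ sinv a :: q ∧ l' = p ++ q ∧ ∀ e ∈ p, scomm F a e := by
  induction l generalizing l' with
  | nil => simp at h
  | cons b t ih =>
    by_cases h1 : b = sinv a
    · rw [cancel_cons_eq _ _ _ h1] at h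
      obtain rfl : t = l' := by simpa using h
      exact ⟨[], t, by simp [h1], rfl, by simp⟩
    · by_cases h2 : scomm F a b
      · rw [cancel_cons_comm _ h2] at h
        obtain ⟨t', ht', rfl⟩ : ∃ t', cancel F a t = some t' ∧ b :: t' = l' := by
          cases hc : cancel F a t with
          | none => rw [hc] at h; simp at h
          | some u => rw [hc] at h; exact ⟨u, rfl, by simpa using h⟩
        obtain ⟨p, q, hpq, hl', hp⟩ := ih ht'
        exact ⟨b :: p, q, by simp [hpq], by simp [hl'], by
          intro e he
          rcases List.mem_cons.mp he with rfl | he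
          · exact h2
          · exact hp e he⟩
      · rw [cancel_cons_block _ h1 h2] at h; simp at h

lemma cancel_length {a : Fin k × Bool} {l l' : List (Fin k × Bool)}
    (h : cancel F a l = some l') : l'.length + 1 = l.length := by
  obtain ⟨p, q, rfl, rfl, -⟩ := cancel_decomp h
  simp; omega

lemma wordProd_comm_block {a : Fin k × Bool} {p : List (Fin k × Bool)}
    (hp : ∀ e ∈ p, scomm F a e) :
    sym k F a * wordProd k F p = wordProd k F p * sym k F a := by
  induction p with
  | nil => simp
  | cons e t ih =>
    have he : scomm F a e := hp e (by simp)
    have ht : ∀ e ∈ t, scomm F a e := fun e' he' => hp e' (by simp [he'])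
    rw [wordProd_cons, ← mul_assoc, sym_mul_comm he, mul_assoc, ih ht, ← mul_assoc]

lemma cancel_spec {a : Fin k × Bool} {l l' : List (Fin k × Bool)}
    (h : cancel F a l = some l') :
    sym k F a * wordProd k F l = wordProd k F l' := by
  obtain ⟨p, q, rfl, rfl, hp⟩ := cancel_decomp h
  rw [wordProd_append, wordProd_append, wordProd_cons, ← mul_assoc, wordProd_comm_block hp]
  simp [mul_assoc]

/-- multiply a reduced word by a letter -/
noncomputable def IC (F : Set (Sym2 (Fin k))) (a : Fin k × Bool)
    (l : List (Fin k × Bool)) : List (Fin k × Bool) :=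
  (cancel F a l).getD (a :: l)

lemma IC_of_cancel {a : Fin k × Bool} {l l' : List (Fin k × Bool)}
    (h : cancel F a l = some l') : IC F a l = l' := by
  rw [IC, h]; rfl

lemma IC_of_none {a : Fin k × Bool} {l : List (Fin k × Bool)}
    (h : cancel F a l = none) : IC F a l = a :: l := by
  rw [IC, h]; rfl

lemma IC_spec (a : Fin k × Bool) (l : List (Fin k × Bool)) :
    wordProd k F (IC F a l) = sym k F a * wordProd k F l := by
  cases hc : cancel F a l with
  | none => rw [IC_of_none hc, wordProd_cons]
  | some l' => rw [IC_of_cancel hc, cancel_spec hc]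

lemma IC_length (a : Fin k × Bool) (l : List (Fin k × Bool)) :
    (IC F a l).length = l.length + 1 ∨ (IC F a l).length + 1 = l.length := by
  cases hc : cancel F a l with
  | none => left; rw [IC_of_none hc]; rfl
  | some l' => right; rw [IC_of_cancel hc]; exact cancel_length hc

/-- reduced words -/
def Red (F : Set (Sym2 (Fin k))) : List (Fin k × Bool) → Prop
  | [] => True
  | a :: t => cancel F a t = none ∧ Red F t

@[simp] lemma red_nil : Red F ([] : List (Fin k × Bool)) := trivial

lemma red_cons_iff {a : Fin k × Bool} {t : List (Fin k × Bool)} :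
    Red F (a :: t) ↔ cancel F a t = none ∧ Red F t := Iff.rfl

/-- key exchange lemma: cancelling `a` cannot unblock `b` when `a`, `b` commute -/
lemma cancel_cancel_none {a b : Fin k × Bool} {l l' : List (Fin k × Bool)}
    (hab : scomm F a b) (hb : cancel F b l = none) (ha : cancel F a l = some l') :
    cancel F b l' = none := by
  induction l generalizing l' with
  | nil => simp at ha
  | cons c t ih =>
    by_cases h1 : c = sinv b
    · rw [cancel_cons_eq _ _ _ h1] at hb; simp at hb
    · by_cases h2 : c = sinv a
      · rw [cancel_cons_eq _ _ _ h2] at ha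
        obtain rfl : t = l' := by simpa using ha
        -- b's scan over `c :: t` was blocked or failed in t
        by_cases h3 : scomm F b c
        · rw [cancel_cons_comm _ h3] at hb
          cases hc : cancel F b t with
          | none => rfl
          | some u => rw [hc] at hb; simp at hb
        · -- c = sinv a and ¬scomm b c contradicts scomm a b
          exfalso
          apply h3
          have : scomm F b (sinv a) := scomm_sinv_right.mpr (scomm_symm hab)
          rwa [← h2] at this
      · by_cases h3 : scomm F a c
        · rw [cancel_cons_comm _ h3] at ha
          obtain ⟨t', ht', rfl⟩ : ∃ t', cancel F a t = some t' ∧ c :: t' = l' := by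
            cases hc : cancel F a t with
            | none => rw [hc] at ha; simp at ha
            | some u => rw [hc] at ha; exact ⟨u, rfl, by simpa using ha⟩
          by_cases h4 : scomm F b c
          · rw [cancel_cons_comm _ h4] at hb
            have hbt : cancel F b t = none := by
              cases hc : cancel F b t with
              | none => rfl
              | some u => rw [hc] at hb; simp at hb
            rw [cancel_cons_comm _ h4, ih hbt ht']
            rfl
          · exact cancel_cons_block _ h1 h4
        · rw [cancel_cons_block _ h2 h3] at ha; simp at ha

lemma red_cancel {a : Fin k × Bool} {l l' : List (Fin k × Bool)}
    (hl : Red F l) (h : cancel F a l = some l') : Red F l' := by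
  induction l generalizing l' with
  | nil => simp at h
  | cons b t ih =>
    obtain ⟨hbt, hred⟩ := red_cons_iff.mp hl
    by_cases h1 : b = sinv a
    · rw [cancel_cons_eq _ _ _ h1] at h
      obtain rfl : t = l' := by simpa using h
      exact hred
    · by_cases h2 : scomm F a b
      · rw [cancel_cons_comm _ h2] at h
        obtain ⟨t', ht', rfl⟩ : ∃ t', cancel F a t = some t' ∧ b :: t' = l' := by
          cases hc : cancel F a t with
          | none => rw [hc] at h; simp at h
          | some u => rw [hc] at h; exact ⟨u, rfl, by simpa using h⟩
        refine red_cons_iff.mpr ⟨?_, ih hred ht'⟩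
        exact cancel_cancel_none h2 hbt ht'
      · rw [cancel_cons_block _ h1 h2] at h; simp at h

lemma red_IC {a : Fin k × Bool} {l : List (Fin k × Bool)} (hl : Red F l) :
    Red F (IC F a l) := by
  cases hc : cancel F a l with
  | none => rw [IC_of_none hc]; exact red_cons_iff.mpr ⟨hc, hl⟩
  | some l' => rw [IC_of_cancel hc]; exact red_cancel hl hc

/-! swap equivalence -/

inductive SwapStep (F : Set (Sym2 (Fin k))) :
    List (Fin k × Bool) → List (Fin k × Bool) → Prop
  | swap (p q : List (Fin k × Bool)) (a b : Fin k × Bool) (h : scomm F a b) :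
      SwapStep F (p ++ a :: b :: q) (p ++ b :: a :: q)

def Eqv (F : Set (Sym2 (Fin k))) : List (Fin k × Bool) → List (Fin k × Bool) → Prop :=
  Relation.ReflTransGen (SwapStep F)

lemma eqv_refl (l : List (Fin k × Bool)) : Eqv F l l := Relation.ReflTransGen.refl

lemma eqv_trans {l₁ l₂ l₃ : List (Fin k × Bool)} (h1 : Eqv F l₁ l₂) (h2 : Eqv F l₂ l₃) :
    Eqv F l₁ l₃ := Relation.ReflTransGen.trans h1 h2

lemma swapStep_symm {l₁ l₂ : List (Fin k × Bool)} (h : SwapStep F l₁ l₂) :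
    SwapStep F l₂ l₁ := by
  cases h with
  | swap p q a b hab => exact SwapStep.swap p q b a (scomm_symm hab)

lemma eqv_symm {l₁ l₂ : List (Fin k × Bool)} (h : Eqv F l₁ l₂) : Eqv F l₂ l₁ := by
  induction h with
  | refl => exact eqv_refl _
  | tail _ hstep ih =>
      exact eqv_trans (Relation.ReflTransGen.single (swapStep_symm hstep)) ih

lemma eqv_single {l₁ l₂ : List (Fin k × Bool)} (h : SwapStep F l₁ l₂) : Eqv F l₁ l₂ :=
  Relation.ReflTransGen.single h

lemma swapStep_cons {l₁ l₂ : List (Fin k × Bool)} (e : Fin k × Bool)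
    (h : SwapStep F l₁ l₂) : SwapStep F (e :: l₁) (e :: l₂) := by
  cases h with
  | swap p q a b hab => exact SwapStep.swap (e :: p) q a b hab

lemma eqv_cons {l₁ l₂ : List (Fin k × Bool)} (e : Fin k × Bool) (h : Eqv F l₁ l₂) :
    Eqv F (e :: l₁) (e :: l₂) := by
  induction h with
  | refl => exact eqv_refl _
  | tail _ hstep ih => exact Relation.ReflTransGen.tail ih (swapStep_cons _ hstep)

lemma swapStep_length {l₁ l₂ : List (Fin k × Bool)} (h : SwapStep F l₁ l₂) :
    l₁.length = l₂.length := by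
  cases h with | swap p q a b hab => simp

lemma eqv_length {l₁ l₂ : List (Fin k × Bool)} (h : Eqv F l₁ l₂) :
    l₁.length = l₂.length := by
  induction h with
  | refl => rfl
  | tail _ hstep ih => exact ih.trans (swapStep_length hstep)

lemma swapStep_wordProd {l₁ l₂ : List (Fin k × Bool)} (h : SwapStep F l₁ l₂) :
    wordProd k F l₁ = wordProd k F l₂ := by
  cases h with
  | swap p q a b hab =>
    simp only [wordProd_append, wordProd_cons]
    congr 1
    rw [← mul_assoc, ← mul_assoc, sym_mul_comm hab]

lemma eqv_wordProd {l₁ l₂ : List (Fin k × Bool)} (h : Eqv F l₁ l₂) :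
    wordProd k F l₁ = wordProd k F l₂ := by
  induction h with
  | refl => rfl
  | tail _ hstep ih => exact ih.trans (swapStep_wordProd hstep)

/-- a letter commuting with a block can be moved across it -/
lemma eqv_move_head {a : Fin k × Bool} (p q : List (Fin k × Bool))
    (hp : ∀ e ∈ p, scomm F a e) :
    Eqv F (a :: (p ++ q)) (p ++ a :: q) := by
  induction p with
  | nil => exact eqv_refl _
  | cons e t ih =>
    have he : scomm F a e := hp e (by simp)
    have step1 : SwapStep F (a :: e :: (t ++ q)) (e :: a :: (t ++ q)) :=
      SwapStep.swap [] (t ++ q) a e he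
    have : Eqv F (e :: (a :: (t ++ q))) (e :: (t ++ a :: q)) :=
      eqv_cons e (ih fun x hx => hp x (by simp [hx]))
    exact eqv_trans (eqv_single step1) this

/-- how cancellation interacts with one swap -/
lemma cancel_swap {c d : Fin k × Bool} (hcd : scomm F c d) (a : Fin k × Bool)
    (p q : List (Fin k × Bool)) :
    (cancel F a (p ++ c :: d :: q) = none ∧ cancel F a (p ++ d :: c :: q) = none) ∨
    (∃ r r', cancel F a (p ++ c :: d :: q) = some r ∧
      cancel F a (p ++ d :: c :: q) = some r' ∧ Eqv F r r') := by
  induction p with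
  | nil =>
    simp only [List.nil_append]
    by_cases h1 : c = sinv a
    · -- c cancels in the first list; d ≠ sinv a since scomm c d
      have hd : d ≠ sinv a := by
        intro he
        exact hcd.1 (by rw [h1, he])
      have hda : scomm F a d := by
        have := hcd
        rw [h1] at this
        exact scomm_sinv_left.mp this
      right
      refine ⟨d :: q, d :: q, cancel_cons_eq _ _ _ h1, ?_, eqv_refl _⟩
      rw [cancel_cons_comm _ hda, cancel_cons_eq _ _ _ h1]
      rfl
    · by_cases h2 : d = sinv a
      · have hca : scomm F a c := by
          have := hcd
          rw [h2] at this
          exact scomm_sinv_left.mp (scomm_symm this)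
        right
        refine ⟨c :: q, c :: q, ?_, cancel_cons_eq _ _ _ h2, eqv_refl _⟩
        rw [cancel_cons_comm _ hca, cancel_cons_eq _ _ _ h2]
        rfl
      · by_cases h3 : scomm F a c
        · by_cases h4 : scomm F a d
          · cases hq : cancel F a q with
            | none =>
              left
              constructor
              · rw [cancel_cons_comm _ h3, cancel_cons_comm _ h4, hq]; rfl
              · rw [cancel_cons_comm _ h4, cancel_cons_comm _ h3, hq]; rfl
            | some r =>
              right
              refine ⟨c :: d :: r, d :: c :: r, ?_, ?_, ?_⟩
              · rw [cancel_cons_comm _ h3, cancel_cons_comm _ h4, hq]; rfl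
              · rw [cancel_cons_comm _ h4, cancel_cons_comm _ h3, hq]; rfl
              · exact eqv_single (SwapStep.swap [] r c d hcd)
          · left
            constructor
            · rw [cancel_cons_comm _ h3, cancel_cons_block _ h2 h4]; rfl
            · rw [cancel_cons_block _ h2 h4]
        · by_cases h4 : scomm F a d
          · left
            constructor
            · rw [cancel_cons_block _ h1 h3]
            · rw [cancel_cons_comm _ h4, cancel_cons_block _ h1 h3]; rfl
          · left
            exact ⟨cancel_cons_block _ h1 h3, cancel_cons_block _ h2 h4⟩
  | cons e t ih =>
    by_cases h1 : e = sinv a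
    · right
      refine ⟨t ++ c :: d :: q, t ++ d :: c :: q,
        cancel_cons_eq _ _ _ h1, cancel_cons_eq _ _ _ h1, ?_⟩
      exact eqv_single (SwapStep.swap t q c d hcd)
    · by_cases h2 : scomm F a e
      · rcases ih with ⟨hn1, hn2⟩ | ⟨r, r', hr, hr', hrr⟩
        · left
          constructor
          · rw [List.cons_append, cancel_cons_comm _ h2, hn1]; rfl
          · rw [List.cons_append, cancel_cons_comm _ h2, hn2]; rfl
        · right
          refine ⟨e :: r, e :: r', ?_, ?_, eqv_cons e hrr⟩
          · rw [List.cons_append, cancel_cons_comm _ h2, hr]; rfl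
          · rw [List.cons_append, cancel_cons_comm _ h2, hr']; rfl
      · left
        constructor
        · rw [List.cons_append, cancel_cons_block _ h1 h2]
        · rw [List.cons_append, cancel_cons_block _ h1 h2]

lemma IC_swapStep {l₁ l₂ : List (Fin k × Bool)} (a : Fin k × Bool)
    (h : SwapStep F l₁ l₂) : Eqv F (IC F a l₁) (IC F a l₂) := by
  cases h with
  | swap p q c d hcd =>
    rcases cancel_swap hcd a p q with ⟨hn1, hn2⟩ | ⟨r, r', hr, hr', hrr⟩
    · rw [IC_of_none hn1, IC_of_none hn2]
      exact eqv_cons a (eqv_single (SwapStep.swap p q _ _ hcd))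
    · rw [IC_of_cancel hr, IC_of_cancel hr']
      exact hrr

lemma IC_eqv {l₁ l₂ : List (Fin k × Bool)} (a : Fin k × Bool) (h : Eqv F l₁ l₂) :
    Eqv F (IC F a l₁) (IC F a l₂) := by
  induction h with
  | refl => exact eqv_refl _
  | tail _ hstep ih => exact eqv_trans ih (IC_swapStep a hstep)

lemma red_swap_core {a b : Fin k × Bool} (hab : scomm F a b) :
    ∀ p q, Red F (p ++ a :: b :: q) → Red F (p ++ b :: a :: q) := by
  intro p
  induction p with
  | nil =>
    intro q hred
    obtain ⟨h1, h2, h3⟩ : cancel F a (b :: q) = none ∧ cancel F b q = none ∧ Red F q := by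
      obtain ⟨x, y, z⟩ := hred
      exact ⟨x, y, z⟩
    have haq : cancel F a q = none := by
      rw [cancel_cons_comm _ hab] at h1
      cases hc : cancel F a q with
      | none => rfl
      | some u => rw [hc] at h1; simp at h1
    refine ⟨?_, haq, h3⟩
    rw [cancel_cons_comm _ (scomm_symm hab), h2]
    rfl
  | cons e t ih =>
    intro q hred
    rw [List.cons_append] at hred ⊢
    obtain ⟨h1, h2⟩ := hred
    refine ⟨?_, ih q h2⟩
    rcases cancel_swap hab e t q with ⟨hn1, hn2⟩ | ⟨r, r', hr, hr', hrr⟩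
    · exact hn2
    · rw [hr] at h1; simp at h1

lemma red_swapStep {l₁ l₂ : List (Fin k × Bool)} (h : SwapStep F l₁ l₂)
    (hred : Red F l₁) : Red F l₂ := by
  cases h with
  | swap p q a b hab => exact red_swap_core hab p q hred

lemma red_eqv {l₁ l₂ : List (Fin k × Bool)} (h : Eqv F l₁ l₂) (hred : Red F l₁) :
    Red F l₂ := by
  induction h with
  | refl => exact hred
  | tail _ hstep ih => exact red_swapStep hstep ih

/-! the two key identities -/

/-- in a reduced word, after cancelling `a`'s inverse the letter `a`'s inverse's inverse
cannot be cancelled -/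
lemma cancel_red_none {c : Fin k × Bool} {l l₁ : List (Fin k × Bool)}
    (hred : Red F l) (h : cancel F c l = some l₁) :
    cancel F (sinv c) l₁ = none := by
  induction l generalizing l₁ with
  | nil => simp at h
  | cons e t ih =>
    obtain ⟨het, hredt⟩ := hred
    by_cases h1 : e = sinv c
    · rw [cancel_cons_eq _ _ _ h1] at h
      obtain rfl : t = l₁ := by simpa using h
      rwa [← h1]
    · by_cases h2 : scomm F c e
      · rw [cancel_cons_comm _ h2] at h
        obtain ⟨t₁, ht₁, rfl⟩ : ∃ t₁, cancel F c t = some t₁ ∧ e :: t₁ = l₁ := by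
          cases hc : cancel F c t with
          | none => rw [hc] at h; simp at h
          | some u => rw [hc] at h; exact ⟨u, rfl, by simpa using h⟩
        have he1 : e ≠ sinv (sinv c) := by
          rw [sinv_sinv]
          intro he
          exact h2.1 (by rw [he])
        by_cases h3 : scomm F (sinv c) e
        · rw [cancel_cons_comm _ h3, ih hredt ht₁]
          rfl
        · exact cancel_cons_block _ he1 h3
      · rw [cancel_cons_block _ h1 h2] at h; simp at h

/-- E1 : `a · (a⁻¹ · l) = l` on reduced words, up to swaps -/
lemma E1 {a : Fin k × Bool} {l : List (Fin k × Bool)} (hred : Red F l) :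
    Eqv F (IC F a (IC F (sinv a) l)) l := by
  cases hc : cancel F (sinv a) l with
  | none =>
    rw [IC_of_none hc]
    have : cancel F a (sinv a :: l) = some l := cancel_cons_eq _ _ _ rfl
    rw [IC_of_cancel this]
    exact eqv_refl l
  | some l₁ =>
    rw [IC_of_cancel hc]
    have hnone : cancel F a l₁ = none := by
      have := cancel_red_none hred hc
      rwa [sinv_sinv] at this
    rw [IC_of_none hnone]
    obtain ⟨p, q, hl, hl₁, hp⟩ := cancel_decomp hc
    rw [hl₁, hl, sinv_sinv]
    exact eqv_move_head p q fun e he => by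
      have := hp e he
      rwa [scomm_sinv_left] at this

/-- simultaneous double cancellation -/
lemma cancel_cancel_some {a b : Fin k × Bool} {l l₁ l₂ : List (Fin k × Bool)}
    (hab : scomm F a b) (hb : cancel F b l = some l₁) (ha : cancel F a l = some l₂) :
    ∃ m, cancel F a l₁ = some m ∧ cancel F b l₂ = some m := by
  induction l generalizing l₁ l₂ with
  | nil => simp at ha
  | cons c t ih =>
    by_cases h1 : c = sinv a
    · have h2 : c ≠ sinv b := by
        intro he
        exact hab.1 (by rw [← sinv_fst (k := k) a, ← h1, he, sinv_fst])
      rw [cancel_cons_eq _ _ _ h1] at ha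
      obtain rfl : t = l₂ := by simpa using ha
      have hbc : scomm F b c := by
        rw [h1, scomm_sinv_right]
        exact scomm_symm hab
      rw [cancel_cons_comm _ hbc] at hb
      obtain ⟨t₁, ht₁, rfl⟩ : ∃ t₁, cancel F b t = some t₁ ∧ c :: t₁ = l₁ := by
        cases hc : cancel F b t with
        | none => rw [hc] at hb; simp at hb
        | some u => rw [hc] at hb; exact ⟨u, rfl, by simpa using hb⟩
      exact ⟨t₁, cancel_cons_eq _ _ _ h1, ht₁⟩
    · by_cases h2 : c = sinv b
      · rw [cancel_cons_eq _ _ _ h2] at hb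
        obtain rfl : t = l₁ := by simpa using hb
        have hac : scomm F a c := by
          rw [h2, scomm_sinv_right]
          exact hab
        rw [cancel_cons_comm _ hac] at ha
        obtain ⟨t₂, ht₂, rfl⟩ : ∃ t₂, cancel F a t = some t₂ ∧ c :: t₂ = l₂ := by
          cases hc : cancel F a t with
          | none => rw [hc] at ha; simp at ha
          | some u => rw [hc] at ha; exact ⟨u, rfl, by simpa using ha⟩
        exact ⟨t₂, ht₂, cancel_cons_eq _ _ _ h2⟩
      · -- c is neither inverse
        have h3 : scomm F a c := by
          by_contra h3
          rw [cancel_cons_block _ h1 h3] at ha; simp at ha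
        have h4 : scomm F b c := by
          by_contra h4
          rw [cancel_cons_block _ h2 h4] at hb; simp at hb
        rw [cancel_cons_comm _ h3] at ha
        rw [cancel_cons_comm _ h4] at hb
        obtain ⟨t₂, ht₂, rfl⟩ : ∃ t₂, cancel F a t = some t₂ ∧ c :: t₂ = l₂ := by
          cases hc : cancel F a t with
          | none => rw [hc] at ha; simp at ha
          | some u => rw [hc] at ha; exact ⟨u, rfl, by simpa using ha⟩
        obtain ⟨t₁, ht₁, rfl⟩ : ∃ t₁, cancel F b t = some t₁ ∧ c :: t₁ = l₁ := by
          cases hc : cancel F b t with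
          | none => rw [hc] at hb; simp at hb
          | some u => rw [hc] at hb; exact ⟨u, rfl, by simpa using hb⟩
        obtain ⟨m, hm1, hm2⟩ := ih ht₁ ht₂
        refine ⟨c :: m, ?_, ?_⟩
        · rw [cancel_cons_comm _ h3, hm1]; rfl
        · rw [cancel_cons_comm _ h4, hm2]; rfl

/-- E2 : commuting letters act commutatively, up to swaps -/
lemma E2 {a b : Fin k × Bool} {l : List (Fin k × Bool)} (hab : scomm F a b) :
    Eqv F (IC F a (IC F b l)) (IC F b (IC F a l)) := by
  have hba := scomm_symm hab
  have hansb : a ≠ sinv b := fun he => hab.1 (by rw [he]; rfl)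
  have hbnsa : b ≠ sinv a := fun he => hba.1 (by rw [he]; rfl)
  cases hcb : cancel F b l with
  | none =>
    cases hca : cancel F a l with
    | none =>
      rw [IC_of_none hcb, IC_of_none hca]
      have e1 : cancel F a (b :: l) = none := by
        rw [cancel_cons_comm _ hab, hca]; rfl
      have e2 : cancel F b (a :: l) = none := by
        rw [cancel_cons_comm _ hba, hcb]; rfl
      rw [IC_of_none e1, IC_of_none e2]
      exact eqv_single (SwapStep.swap [] l a b hab)
    | some l₂ =>
      rw [IC_of_none hcb, IC_of_cancel hca]
      have e1 : cancel F a (b :: l) = some (b :: l₂) := by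
        rw [cancel_cons_comm _ hab, hca]; rfl
      rw [IC_of_cancel e1]
      have e2 : cancel F b l₂ = none := cancel_cancel_none hab hcb hca
      rw [IC_of_none e2]
      exact eqv_refl _
  | some l₁ =>
    cases hca : cancel F a l with
    | none =>
      rw [IC_of_cancel hcb, IC_of_none hca]
      have e2 : cancel F b (a :: l) = some (a :: l₁) := by
        rw [cancel_cons_comm _ hba, hcb]; rfl
      rw [IC_of_cancel e2]
      have e1 : cancel F a l₁ = none := cancel_cancel_none hba hca hcb
      rw [IC_of_none e1]
      exact eqv_refl _
    | some l₂ =>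
      rw [IC_of_cancel hcb, IC_of_cancel hca]
      obtain ⟨m, hm1, hm2⟩ := cancel_cancel_some hab hcb hca
      rw [IC_of_cancel hm1, IC_of_cancel hm2]
      exact eqv_refl _

/-! traces of reduced words and the permutation action -/

def RedWord (k : ℕ) (F : Set (Sym2 (Fin k))) := {l : List (Fin k × Bool) // Red F l}

instance redSetoid (k : ℕ) (F : Set (Sym2 (Fin k))) : Setoid (RedWord k F) :=
  ⟨fun l l' => Eqv F l.1 l'.1,
    ⟨fun _ => eqv_refl _, eqv_symm, eqv_trans⟩⟩

def Traces (k : ℕ) (F : Set (Sym2 (Fin k))) := Quotient (redSetoid k F)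

noncomputable def ICq (a : Fin k × Bool) : Traces k F → Traces k F :=
  Quotient.map (fun l => ⟨IC F a l.1, red_IC l.2⟩) (fun _ _ h => IC_eqv a h)

lemma ICq_mk (a : Fin k × Bool) (l : RedWord k F) :
    ICq a (⟦l⟧ : Traces k F) = ⟦⟨IC F a l.1, red_IC l.2⟩⟧ := rfl

lemma ICq_left_inv (a : Fin k × Bool) (q : Traces k F) : ICq a (ICq (sinv a) q) = q := by
  induction q using Quotient.ind with
  | _ l =>
    exact Quotient.sound (E1 l.2)

noncomputable def ICperm (a : Fin k × Bool) : Equiv.Perm (Traces k F) where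
  toFun := ICq a
  invFun := ICq (sinv a)
  left_inv := fun q => by
    have := ICq_left_inv (F := F) (sinv a) (q := q)
    rwa [sinv_sinv] at this
  right_inv := fun q => ICq_left_inv a q

@[simp] lemma ICperm_apply (a : Fin k × Bool) (q : Traces k F) :
    ICperm a q = ICq a q := rfl

lemma ICperm_inv (a : Fin k × Bool) :
    (ICperm (F := F) a)⁻¹ = ICperm (sinv a) := Equiv.ext fun _ => rfl

lemma ICq_comm {a b : Fin k × Bool} (hab : scomm F a b) (q : Traces k F) :
    ICq a (ICq b q) = ICq b (ICq a q) := by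
  induction q using Quotient.ind with
  | _ l =>
    exact Quotient.sound (E2 hab)

noncomputable def Phi : Grp k F →* Equiv.Perm (Traces k F) :=
  PresentedGroup.toGroup (f := fun i => ICperm (F := F) (i, true)) (by
    rintro r ⟨i, j, hij, hF, rfl⟩
    simp only [map_mul, map_inv, FreeGroup.lift_apply_of]
    have hcomm : ICperm (F := F) (i, true) * ICperm (F := F) (j, true)
        = ICperm (j, true) * ICperm (i, true) := by
      ext q
      simp only [Equiv.Perm.mul_apply, ICperm_apply]
      exact ICq_comm ⟨by simpa using hij, hF⟩ q
    rw [hcomm]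
    group)

lemma Phi_gen (i : Fin k) : Phi (gen k F i) = ICperm (i, true) :=
  PresentedGroup.toGroup.of _

lemma Phi_sym (a : Fin k × Bool) : Phi (sym k F a) = ICperm a := by
  cases a with | mk i b =>
  cases b
  · show Phi ((gen k F i)⁻¹) = _
    rw [map_inv, Phi_gen, ICperm_inv]
    rfl
  · exact Phi_gen i

def emptyRW : RedWord k F := ⟨[], red_nil⟩

noncomputable def NFq (x : Grp k F) : Traces k F := Phi x (⟦emptyRW⟧ : Traces k F)

noncomputable def qlen : Traces k F → ℕ :=
  Quotient.lift (fun l : RedWord k F => l.1.length) (fun _ _ h => eqv_length h)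

noncomputable def qprod : Traces k F → Grp k F :=
  Quotient.lift (fun l : RedWord k F => wordProd k F l.1) (fun _ _ h => eqv_wordProd h)

lemma NFq_sym_mul (a : Fin k × Bool) (x : Grp k F) :
    NFq (sym k F a * x) = ICq a (NFq x) := by
  unfold NFq
  rw [map_mul, Phi_sym]
  rfl

lemma qprod_ICq (a : Fin k × Bool) (q : Traces k F) :
    qprod (ICq a q) = sym k F a * qprod q := by
  induction q using Quotient.ind with
  | _ l =>
    rw [ICq_mk]
    show wordProd k F (IC F a l.1) = sym k F a * wordProd k F l.1
    exact IC_spec a l.1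

lemma qlen_ICq_le (a : Fin k × Bool) (q : Traces k F) :
    qlen (ICq a q) ≤ qlen q + 1 := by
  induction q using Quotient.ind with
  | _ l =>
    rw [ICq_mk]
    show (IC F a l.1).length ≤ l.1.length + 1
    rcases IC_length (F := F) a l.1 with h | h <;> omega

lemma qlen_ICq_cases (a : Fin k × Bool) (q : Traces k F) :
    qlen (ICq a q) = qlen q + 1 ∨ qlen (ICq a q) + 1 = qlen q := by
  induction q using Quotient.ind with
  | _ l =>
    rw [ICq_mk]
    show (IC F a l.1).length = l.1.length + 1 ∨ (IC F a l.1).length + 1 = l.1.length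
    exact IC_length a l.1

lemma qprod_NFq (x : Grp k F) : qprod (NFq x) = x := by
  obtain ⟨l, rfl⟩ := exists_word x
  induction l with
  | nil =>
    show qprod (NFq 1) = _
    unfold NFq
    rw [map_one]
    rfl
  | cons a t ih =>
    rw [wordProd_cons, NFq_sym_mul, qprod_ICq, ih]

lemma qlen_NFq_le_word (l : List (Fin k × Bool)) :
    qlen (NFq (wordProd k F l)) ≤ l.length := by
  induction l with
  | nil =>
    show qlen (NFq 1) ≤ 0
    unfold NFq
    rw [map_one]
    exact le_refl 0
  | cons a t ih =>
    rw [wordProd_cons, NFq_sym_mul]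
    calc qlen (ICq a (NFq (wordProd k F t))) ≤ qlen (NFq (wordProd k F t)) + 1 :=
      qlen_ICq_le _ _
    _ ≤ t.length + 1 := by omega
    _ = (a :: t).length := rfl

lemma len_eq_qlen (x : Grp k F) : len x = qlen (NFq x) := by
  apply Nat.le_antisymm
  · obtain ⟨w, hw⟩ := Quotient.exists_rep (NFq x)
    have h1 : qprod (NFq x) = x := qprod_NFq x
    rw [← hw] at h1 ⊢
    have : wordProd k F w.1 = x := h1
    calc len x ≤ w.1.length := len_le this
    _ = qlen (⟦w⟧ : Traces k F) := rfl
  · obtain ⟨l, hl, hlen⟩ := exists_minWord x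
    rw [← hlen, ← hl]
    exact qlen_NFq_le_word l

/-- characterisation of initial letters via cancellation in the normal form -/
lemma init_iff_cancel {a : Fin k × Bool} {x : Grp k F} {w : RedWord k F}
    (hw : NFq x = (⟦w⟧ : Traces k F)) :
    Init a x ↔ ∃ l', cancel F (sinv a) w.1 = some l' := by
  have key : len ((sym k F a)⁻¹ * x) = (IC F (sinv a) w.1).length := by
    have e : (sym k F a)⁻¹ * x = sym k F (sinv a) * x := by rw [sym_sinv]
    rw [e, len_eq_qlen, NFq_sym_mul, hw, ICq_mk]
    rfl
  have hx : len x = w.1.length := by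
    rw [len_eq_qlen, hw]; rfl
  constructor
  · intro h
    have := init_len h
    rw [key, hx] at this
    cases hc : cancel F (sinv a) w.1 with
    | none => rw [IC_of_none hc] at this; simp at this; omega
    | some l' => exact ⟨l', rfl⟩
  · rintro ⟨l', hl'⟩
    apply init_of_len
    rw [key, hx, IC_of_cancel hl']
    exact cancel_length hl'

/-- two distinct cancellable letters commute, and cancelling one leaves the other
cancellable -/
lemma cancel_both {c d : Fin k × Bool} {l l₁ l₂ : List (Fin k × Bool)} (hcd : c ≠ d)
    (hc : cancel F c l = some l₁) (hd : cancel F d l = some l₂) :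
    scomm F c d ∧ ∃ m, cancel F d l₁ = some m := by
  induction l generalizing l₁ l₂ with
  | nil => simp at hc
  | cons e t ih =>
    by_cases h1 : e = sinv c
    · rw [cancel_cons_eq _ _ _ h1] at hc
      obtain rfl : t = l₁ := by simpa using hc
      have h2 : e ≠ sinv d := by
        rw [h1]
        intro he
        exact hcd (by rw [← sinv_sinv c, he, sinv_sinv])
      have h3 : scomm F d e := by
        by_contra h3
        rw [cancel_cons_block _ h2 h3] at hd
        simp at hd
      have hscomm : scomm F c d := by
        have := scomm_symm h3
        rw [h1] at this
        exact scomm_sinv_left.mp this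
      refine ⟨hscomm, ?_⟩
      rw [cancel_cons_comm _ h3] at hd
      cases hdt : cancel F d t with
      | none => rw [hdt] at hd; simp at hd
      | some t₂ => exact ⟨t₂, rfl⟩
    · have h3 : scomm F c e := by
        by_contra h3
        rw [cancel_cons_block _ h1 h3] at hc
        simp at hc
      rw [cancel_cons_comm _ h3] at hc
      obtain ⟨t₁, ht₁, rfl⟩ : ∃ t₁, cancel F c t = some t₁ ∧ e :: t₁ = l₁ := by
        cases hct : cancel F c t with
        | none => rw [hct] at hc; simp at hc
        | some u => rw [hct] at hc; exact ⟨u, rfl, by simpa using hc⟩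
      by_cases h2 : e = sinv d
      · have hscomm : scomm F c d := by
          have := h3
          rw [h2] at this
          exact scomm_sinv_right.mp this
        exact ⟨hscomm, t₁, cancel_cons_eq _ _ _ h2⟩
      · have h4 : scomm F d e := by
          by_contra h4
          rw [cancel_cons_block _ h2 h4] at hd
          simp at hd
        rw [cancel_cons_comm _ h4] at hd
        obtain ⟨t₂, ht₂, rfl⟩ : ∃ t₂, cancel F d t = some t₂ ∧ e :: t₂ = l₂ := by
          cases hdt : cancel F d t with
          | none => rw [hdt] at hd; simp at hd
          | some u => rw [hdt] at hd; exact ⟨u, rfl, by simpa using hd⟩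
        obtain ⟨hscomm, m, hm⟩ := ih ht₁ ht₂
        refine ⟨hscomm, e :: m, ?_⟩
        rw [cancel_cons_comm _ h4, hm]
        rfl

/-- K1 : two distinct initial letters commute, and each stays initial after
removing the other. -/
lemma K1 {a b : Fin k × Bool} {x : Grp k F} (hab : a ≠ b) (ha : Init a x) (hb : Init b x) :
    scomm F a b ∧ Init b ((sym k F a)⁻¹ * x) := by
  obtain ⟨w, hw⟩ := Quotient.exists_rep (NFq x)
  obtain ⟨l₁, hl₁⟩ := (init_iff_cancel hw.symm).mp ha
  obtain ⟨l₂, hl₂⟩ := (init_iff_cancel hw.symm).mp hb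
  have hinj : sinv a ≠ sinv b := by
    intro he
    exact hab (by rw [← sinv_sinv a, he, sinv_sinv])
  obtain ⟨hscomm, m, hm⟩ := cancel_both hinj hl₁ hl₂
  have hab' : scomm F a b := by
    have := hscomm
    exact scomm_sinv_right.mp (scomm_sinv_left.mp this)
  refine ⟨hab', ?_⟩
  have hx' : NFq ((sym k F a)⁻¹ * x) = (⟦⟨l₁, red_cancel w.2 hl₁⟩⟧ : Traces k F) := by
    have e : (sym k F a)⁻¹ * x = sym k F (sinv a) * x := by rw [sym_sinv]
    rw [e, NFq_sym_mul, ← hw, ICq_mk]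
    apply Quotient.sound
    show Eqv F (IC F (sinv a) w.1) l₁
    rw [IC_of_cancel hl₁]
    exact eqv_refl _
  exact (init_iff_cancel hx').mpr ⟨m, hm⟩

/-! ### Part C: the lattice of prefixes -/

def IsMeet' {k : ℕ} {F : Set (Sym2 (Fin k))} (x y m : Grp k F) : Prop :=
  le m x ∧ le m y ∧ ∀ w, le w x → le w y → le w m

lemma init_swap {α β : Fin k × Bool} {x : Grp k F} (hc : scomm F α β)
    (hβ : Init β x) (hα : Init α ((sym k F β)⁻¹ * x)) : Init α x := by
  have h2 : le (sym k F β * sym k F α) x := le_compose hβ hα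
  have hl2 : len (sym k F β * sym k F α) = 2 := by
    rw [len_compose hβ hα, len_sym, len_sym]
  have hcomm : sym k F β * sym k F α = sym k F α * sym k F β := sym_mul_comm (scomm_symm hc)
  have h3 : le (sym k F α) (sym k F β * sym k F α) := by
    rw [le_iff_quot, hl2, len_sym, hcomm]
    have e : (sym k F α)⁻¹ * (sym k F α * sym k F β) = sym k F β := by group
    rw [e, len_sym]
  exact le_trans' h3 h2

lemma init_stack {α β : Fin k × Bool} {t u : Grp k F} (hc : scomm F α β)
    (hβt : Init β t) (hαu : Init α u) (ht : le t ((sym k F α)⁻¹ * u)) :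
    Init β (sym k F α * t) ∧ len (sym k F α * t) = len t + 1 := by
  have hlen : len (sym k F α * t) = len t + 1 := by
    rw [len_compose hαu ht, len_sym]; omega
  refine ⟨?_, hlen⟩
  have e : (sym k F β)⁻¹ * (sym k F α * t) = sym k F α * ((sym k F β)⁻¹ * t) := by
    have h := ((sym_commute hc).symm.inv_left).eq
    rw [← mul_assoc, h, mul_assoc]
  have hupper : len ((sym k F β)⁻¹ * (sym k F α * t)) ≤ len t := by
    rw [e]
    calc len (sym k F α * ((sym k F β)⁻¹ * t)) ≤
        len (sym k F α) + len ((sym k F β)⁻¹ * t) := len_mul_le _ _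
    _ = 1 + (len t - 1) := by rw [len_sym]; have := init_len hβt; omega
    _ ≤ len t := by have := init_len hβt; omega
  have hlower : len (sym k F α * t) ≤ 1 + len ((sym k F β)⁻¹ * (sym k F α * t)) := by
    have e2 : sym k F α * t = sym k F β * ((sym k F β)⁻¹ * (sym k F α * t)) := by group
    calc len (sym k F α * t)
        = len (sym k F β * ((sym k F β)⁻¹ * (sym k F α * t))) := by rw [← e2]
    _ ≤ len (sym k F β) + len ((sym k F β)⁻¹ * (sym k F α * t)) := len_mul_le _ _
    _ = 1 + _ := by rw [len_sym]
  apply init_of_len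
  omega

/-- K4' : if `α` is initial in `j` but not in `x ≤ j`, then `x ≤ α⁻¹ j` -/
lemma le_quot_of_not_init {x j : Grp k F} {α : Fin k × Bool}
    (hxj : le x j) (hα : Init α j) (hnx : ¬ Init α x) :
    le x ((sym k F α)⁻¹ * j) := by
  generalize hn : len x = n
  induction n using Nat.strong_induction_on generalizing x j with
  | _ n ih =>
  by_cases hx1 : x = 1
  · subst hx1; exact one_le' _
  obtain ⟨β, hβ⟩ := init_exists hx1
  have hβj : Init β j := init_of_le hxj hβ
  have hβα : β ≠ α := fun he => hnx (he ▸ hβ)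
  obtain ⟨hcomm, hβ'⟩ := K1 (Ne.symm hβα) hα hβj
  obtain ⟨-, hα'⟩ := K1 hβα hβj hα
  have hx₁j : le ((sym k F β)⁻¹ * x) ((sym k F β)⁻¹ * j) := prefix_cancel hβ hxj
  have hnx₁ : ¬ Init α ((sym k F β)⁻¹ * x) := fun hαx₁ => hnx (init_swap hcomm hβ hαx₁)
  have hlen : len ((sym k F β)⁻¹ * x) < n := by
    rw [← hn]; have := init_len hβ; omega
  have IH := ih (len ((sym k F β)⁻¹ * x)) hlen hx₁j hα' hnx₁ rfl
  have hswap : (sym k F α)⁻¹ * ((sym k F β)⁻¹ * j)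
      = (sym k F β)⁻¹ * ((sym k F α)⁻¹ * j) := by
    have h := ((sym_commute hcomm).inv_left.inv_right).eq
    rw [← mul_assoc, h, mul_assoc]
  rw [hswap] at IH
  have hfin := le_compose hβ' IH
  rwa [show sym k F β * ((sym k F β)⁻¹ * x) = x by group] at hfin

/-- K5'' : stacking `α` on a common bound -/
lemma le_stack {α : Fin k × Bool} {u t b : Grp k F}
    (hu : le b u) (hαu : Init α u) (hnb : ¬ Init α b)
    (hbt : le b t) (ht : le t ((sym k F α)⁻¹ * u)) : le b (sym k F α * t) := by
  generalize hn : len b = n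
  induction n using Nat.strong_induction_on generalizing b t u with
  | _ n ih =>
  by_cases hb1 : b = 1
  · subst hb1; exact one_le' _
  obtain ⟨β, hβ⟩ := init_exists hb1
  have hβu : Init β u := init_of_le hu hβ
  have hβt : Init β t := init_of_le hbt hβ
  have hβα : β ≠ α := fun he => hnb (he ▸ hβ)
  obtain ⟨hcomm, hβ'⟩ := K1 (Ne.symm hβα) hαu hβu
  obtain ⟨-, hα'⟩ := K1 hβα hβu hαu
  have hu' : le ((sym k F β)⁻¹ * b) ((sym k F β)⁻¹ * u) := prefix_cancel hβ hu
  have hnb₁ : ¬ Init α ((sym k F β)⁻¹ * b) := fun hx => hnb (init_swap hcomm hβ hx)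
  have hbt' : le ((sym k F β)⁻¹ * b) ((sym k F β)⁻¹ * t) := prefix_cancel hβ hbt
  have hswap : (sym k F β)⁻¹ * ((sym k F α)⁻¹ * u)
      = (sym k F α)⁻¹ * ((sym k F β)⁻¹ * u) := by
    have h := ((sym_commute hcomm).inv_left.inv_right).eq
    rw [← mul_assoc, ← h, mul_assoc]
  have ht' : le ((sym k F β)⁻¹ * t) ((sym k F α)⁻¹ * ((sym k F β)⁻¹ * u)) := by
    have := prefix_cancel hβt ht
    rwa [hswap] at this
  have hlen : len ((sym k F β)⁻¹ * b) < n := by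
    rw [← hn]; have := init_len hβ; omega
  have IH := ih (len ((sym k F β)⁻¹ * b)) hlen hu' hα' hnb₁ hbt' ht' rfl
  -- IH : le (β⁻¹ b) (sym α * (β⁻¹ t))
  obtain ⟨hβαt, -⟩ := init_stack hcomm hβt hαu ht
  have e : (sym k F β)⁻¹ * (sym k F α * t) = sym k F α * ((sym k F β)⁻¹ * t) := by
    have h := ((sym_commute hcomm).symm.inv_left).eq
    rw [← mul_assoc, h, mul_assoc]
  have hv : le ((sym k F β)⁻¹ * b) ((sym k F β)⁻¹ * (sym k F α * t)) := by
    rw [e]; exact IH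
  have hfin := le_compose hβαt hv
  rwa [show sym k F β * ((sym k F β)⁻¹ * b) = b by group] at hfin

/-- the inductive step for constructing meets -/
lemma meet_cons {γ : Fin k × Bool} {a b w₁ : Grp k F} (ha : Init γ a) (hb : Init γ b)
    (hw : IsMeet' ((sym k F γ)⁻¹ * a) ((sym k F γ)⁻¹ * b) w₁) :
    IsMeet' a b (sym k F γ * w₁) := by
  obtain ⟨hwa, hwb, huniv⟩ := hw
  refine ⟨le_compose ha hwa, le_compose hb hwb, ?_⟩
  intro v hva hvb
  by_cases hγv : Init γ v
  · have hv₁a : le ((sym k F γ)⁻¹ * v) ((sym k F γ)⁻¹ * a) := prefix_cancel hγv hva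
    have hv₁b : le ((sym k F γ)⁻¹ * v) ((sym k F γ)⁻¹ * b) := prefix_cancel hγv hvb
    have hv₁w : le ((sym k F γ)⁻¹ * v) w₁ := huniv _ hv₁a hv₁b
    have hd : le (sym k F γ) (sym k F γ * w₁) := le_head_compose ha hwa
    have hv' : le ((sym k F γ)⁻¹ * v) ((sym k F γ)⁻¹ * (sym k F γ * w₁)) := by
      rwa [show (sym k F γ)⁻¹ * (sym k F γ * w₁) = w₁ by group]
    have := le_compose hd hv'
    rwa [show sym k F γ * ((sym k F γ)⁻¹ * v) = v by group] at this
  · have h1 : le v ((sym k F γ)⁻¹ * a) := le_quot_of_not_init hva ha hγv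
    have h2 : le v ((sym k F γ)⁻¹ * b) := le_quot_of_not_init hvb hb hγv
    have h3 : le v w₁ := huniv _ h1 h2
    exact le_stack hva ha hγv h3 hwa

lemma meet_trivial {a b : Grp k F} (h : ∀ γ, ¬ (Init γ a ∧ Init γ b)) :
    IsMeet' a b 1 := by
  refine ⟨one_le' a, one_le' b, ?_⟩
  intro v hva hvb
  by_cases hv : v = 1
  · subst hv; exact le_rfl' 1
  · obtain ⟨β, hβ⟩ := init_exists hv
    exact absurd ⟨init_of_le hva hβ, init_of_le hvb hβ⟩ (h β)

lemma meet_exists (a b : Grp k F) : ∃ w, IsMeet' a b w := by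
  generalize hn : len a + len b = n
  induction n using Nat.strong_induction_on generalizing a b with
  | _ n ih =>
  by_cases hc : ∃ γ, Init γ a ∧ Init γ b
  · obtain ⟨γ, hγa, hγb⟩ := hc
    have hlen : len ((sym k F γ)⁻¹ * a) + len ((sym k F γ)⁻¹ * b) < n := by
      rw [← hn]
      have := init_len hγa
      have := init_len hγb
      omega
    obtain ⟨w₁, hw₁⟩ := ih _ hlen ((sym k F γ)⁻¹ * a) ((sym k F γ)⁻¹ * b) rfl
    exact ⟨sym k F γ * w₁, meet_cons hγa hγb hw₁⟩
  · push_neg at hc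
    exact ⟨1, meet_trivial fun γ hγ => hc γ hγ.1 hγ.2⟩

lemma meet_unique {a b w w' : Grp k F} (h : IsMeet' a b w) (h' : IsMeet' a b w') :
    w = w' :=
  le_antisymm' (h'.2.2 w h.1 h.2.1) (h.2.2 w' h'.1 h'.2.1)

/-! length identities -/

lemma len_mul_of_no_common {a b : Grp k F} (h : ∀ γ, ¬ (Init γ a ∧ Init γ b)) :
    len (a⁻¹ * b) = len a + len b := by
  generalize hn : len a = n
  induction n using Nat.strong_induction_on generalizing a b with
  | _ n ih =>
  by_cases ha1 : a = 1
  · subst ha1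
    simp only [len_one] at hn
    simp only [inv_one, one_mul]
    omega
  obtain ⟨α, hα⟩ := init_exists ha1
  have hnb : ¬ Init α b := fun hb => h α ⟨hα, hb⟩
  have hlb : len ((sym k F α)⁻¹ * b) = len b + 1 := not_init_len hnb
  have hla : len ((sym k F α)⁻¹ * a) + 1 = len a := init_len hα
  -- the shifted pair has no common initial letter
  have h' : ∀ β, ¬ (Init β ((sym k F α)⁻¹ * a) ∧ Init β ((sym k F α)⁻¹ * b)) := by
    rintro β ⟨hβa, hβb⟩
    have hsinv : Init (sinv α) ((sym k F α)⁻¹ * b) := by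
      apply init_of_len
      rw [show (sym k F (sinv α))⁻¹ * ((sym k F α)⁻¹ * b) = b by
        rw [sym_sinv]; group]
      omega
    by_cases hβ : β = sinv α
    · subst hβ
      have := init_len hβa
      rw [show (sym k F (sinv α))⁻¹ * ((sym k F α)⁻¹ * a) = a by
        rw [sym_sinv]; group] at this
      omega
    · obtain ⟨hcomm, hβb'⟩ := K1 (fun he => hβ he.symm) hsinv hβb
      rw [show (sym k F (sinv α))⁻¹ * ((sym k F α)⁻¹ * b) = b by
        rw [sym_sinv]; group] at hβb'
      have hcomm' : scomm F α β := scomm_sinv_left.mp hcomm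
      have hβa' : Init β a := init_swap (scomm_symm hcomm') hα hβa
      exact h β ⟨hβa', hβb'⟩
  have hlen : len ((sym k F α)⁻¹ * a) < n := by omega
  have IH := ih _ hlen h' rfl
  rw [show ((sym k F α)⁻¹ * a)⁻¹ * ((sym k F α)⁻¹ * b) = a⁻¹ * b by group] at IH
  omega

lemma len_meet {a b w : Grp k F} (hw : IsMeet' a b w) :
    len (a⁻¹ * b) + 2 * len w = len a + len b := by
  generalize hn : len a + len b = n
  induction n using Nat.strong_induction_on generalizing a b w with
  | _ n ih =>
  by_cases hc : ∃ γ, Init γ a ∧ Init γ b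
  · obtain ⟨γ, hγa, hγb⟩ := hc
    obtain ⟨w₁, hw₁⟩ := meet_exists ((sym k F γ)⁻¹ * a) ((sym k F γ)⁻¹ * b)
    have hwc := meet_cons hγa hγb hw₁
    have hweq : w = sym k F γ * w₁ := meet_unique hw hwc
    have hlw : len (sym k F γ * w₁) = 1 + len w₁ := by
      rw [len_compose hγa hw₁.1, len_sym]
    have hlen : len ((sym k F γ)⁻¹ * a) + len ((sym k F γ)⁻¹ * b) < n := by
      rw [← hn]
      have := init_len hγa
      have := init_len hγb
      omega
    have IH := ih _ hlen hw₁ rfl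
    rw [show ((sym k F γ)⁻¹ * a)⁻¹ * ((sym k F γ)⁻¹ * b) = a⁻¹ * b by group] at IH
    have h1 := init_len hγa
    have h2 := init_len hγb
    rw [hweq, hlw]
    omega
  · push_neg at hc
    have hw1 : w = 1 := meet_unique hw (meet_trivial fun γ hγ => hc γ hγ.1 hγ.2)
    rw [hw1, len_one, len_mul_of_no_common fun γ hγ => hc γ hγ.1 hγ.2]
    omega

/-! joins -/

lemma suffix_le' {v c : Grp k F} (h : le v c⁻¹) : le (c * v) c := by
  have h1 : len (c * v) = len c - len v := by
    rw [← len_inv]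
    rw [show (c * v)⁻¹ = v⁻¹ * c⁻¹ by group, len_quot h, len_inv]
  show len c = len (c * v) + len ((c * v)⁻¹ * c)
  rw [show (c * v)⁻¹ * c = v⁻¹ by group, h1, len_inv]
  have := le_len_le h
  rw [len_inv] at this
  omega

lemma join_exists {a b c : Grp k F} (ha : le a c) (hb : le b c) :
    ∃ j, IsJoin a b j ∧ le j c := by
  obtain ⟨w, hw⟩ := meet_exists (c⁻¹ * a) (c⁻¹ * b)
  have hac : le (c⁻¹ * a) c⁻¹ := suffix_le ha
  have hbc : le (c⁻¹ * b) c⁻¹ := suffix_le hb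
  have hwc : le w c⁻¹ := le_trans' hw.1 hac
  refine ⟨c * w, ⟨?_, ?_, ?_⟩, suffix_le' hwc⟩
  · have := quot_antitone hw.1 hac
    rwa [show (c⁻¹)⁻¹ * (c⁻¹ * a) = a by group, show (c⁻¹)⁻¹ * w = c * w by group] at this
  · have := quot_antitone hw.2.1 hbc
    rwa [show (c⁻¹)⁻¹ * (c⁻¹ * b) = b by group, show (c⁻¹)⁻¹ * w = c * w by group] at this
  · intro v hav hbv
    obtain ⟨t, ht⟩ := meet_exists c v
    have hat : le a t := ht.2.2 a ha hav
    have hbt : le b t := ht.2.2 b hb hbv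
    have h1 : le (c⁻¹ * t) (c⁻¹ * a) := quot_antitone hat ht.1
    have h2 : le (c⁻¹ * t) (c⁻¹ * b) := quot_antitone hbt ht.1
    have h3 : le (c⁻¹ * t) w := hw.2.2 _ h1 h2
    have h5 := quot_antitone h3 hwc
    rw [show (c⁻¹)⁻¹ * w = c * w by group,
      show (c⁻¹)⁻¹ * (c⁻¹ * t) = t by group] at h5
    exact le_trans' h5 ht.2.1

lemma join_unique {a b j j' : Grp k F} (h : IsJoin a b j) (h' : IsJoin a b j') :
    j = j' :=
  le_antisymm' (h.2.2 j' h'.1 h'.2.1) (h'.2.2 j h.1 h.2.1)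

lemma meet_quot {c a b w : Grp k F} (hca : le c a) (hcb : le c b)
    (hw : IsMeet' a b w) : IsMeet' (c⁻¹ * a) (c⁻¹ * b) (c⁻¹ * w) := by
  have hcw : le c w := hw.2.2 c hca hcb
  refine ⟨prefix_cancel hcw hw.1, prefix_cancel hcw hw.2.1, ?_⟩
  intro v h1 h2
  have hta : le (c * v) a := le_compose hca h1
  have htb : le (c * v) b := le_compose hcb h2
  have htw : le (c * v) w := hw.2.2 _ hta htb
  have hct : le c (c * v) := le_head_compose hca h1
  have := prefix_cancel hct htw
  rwa [show c⁻¹ * (c * v) = v by group] at this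

lemma join_quot {c a b j : Grp k F} (hca : le c a) (hcb : le c b)
    (hj : IsJoin a b j) : IsJoin (c⁻¹ * a) (c⁻¹ * b) (c⁻¹ * j) := by
  have hcj : le c j := le_trans' hca hj.1
  refine ⟨prefix_cancel hca hj.1, prefix_cancel hcb hj.2.1, ?_⟩
  intro v h1 h2
  obtain ⟨t, ht⟩ := meet_exists (c⁻¹ * j) v
  have ht1 : le (c⁻¹ * a) t := ht.2.2 _ (prefix_cancel hca hj.1) h1
  have ht2 : le (c⁻¹ * b) t := ht.2.2 _ (prefix_cancel hcb hj.2.1) h2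
  have hctj : le (c * t) j := le_compose hcj ht.1
  have hcct : le c (c * t) := le_head_compose hcj ht.1
  have hact : le a (c * t) := by
    apply prefix_cancel_rev hca hcct
    rwa [show c⁻¹ * (c * t) = t by group]
  have hbct : le b (c * t) := by
    apply prefix_cancel_rev hcb hcct
    rwa [show c⁻¹ * (c * t) = t by group]
  have hjct : le j (c * t) := hj.2.2 _ hact hbct
  have := prefix_cancel hcj hjct
  rw [show c⁻¹ * (c * t) = t by group] at this
  exact le_trans' this ht.2.1

/-! the diamond identity -/

lemma diamond_zero {b c j : Grp k F} (hm : IsMeet' b c 1) (hj : IsJoin b c j) :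
    c⁻¹ * j = b := by
  generalize hn : len c = n
  induction n using Nat.strong_induction_on generalizing b c j with
  | _ n ih =>
  by_cases hc1 : c = 1
  · subst hc1
    have hjb : IsJoin b 1 j := hj
    have : j = b := join_unique hjb ⟨le_rfl' b, one_le' b, fun w hb _ => hb⟩
    rw [this]
    group
  obtain ⟨α, hα⟩ := init_exists hc1
  have hαj : Init α j := init_of_le hj.2.1 hα
  have hαb : ¬ Init α b := by
    intro hab
    have := hm.2.2 _ hab hα
    exact sym_ne_one α (le_one_iff.mp this)
  have hbj₁ : le b ((sym k F α)⁻¹ * j) := le_quot_of_not_init hj.1 hαj hαb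
  have hcj₁ : le ((sym k F α)⁻¹ * c) ((sym k F α)⁻¹ * j) := prefix_cancel hα hj.2.1
  have hm₁ : IsMeet' b ((sym k F α)⁻¹ * c) 1 := by
    refine ⟨one_le' b, one_le' _, ?_⟩
    intro v hvb hvc₁
    by_cases hv : v = 1
    · subst hv; exact le_rfl' 1
    obtain ⟨β, hβ⟩ := init_exists hv
    exfalso
    have hβb : Init β b := init_of_le hvb hβ
    have hβc₁ : Init β ((sym k F α)⁻¹ * c) := init_of_le hvc₁ hβ
    have hβj : Init β j := init_of_le (le_trans' hvb hj.1) hβ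
    by_cases hβα : β = α
    · subst hβα; exact hαb hβb
    obtain ⟨hcomm, -⟩ := K1 (fun he => hβα he.symm) hαj hβj
    have hαβc : le (sym k F α * sym k F β) c := le_compose hα hβc₁
    have hl2 : len (sym k F α * sym k F β) = 2 := by
      rw [len_compose hα hβc₁, len_sym, len_sym]
    have hβαβ : le (sym k F β) (sym k F α * sym k F β) := by
      rw [le_iff_quot, hl2, len_sym]
      rw [show (sym k F β)⁻¹ * (sym k F α * sym k F β) = sym k F α by
        have h := (sym_commute hcomm).inv_right.eq
        rw [← mul_assoc, ← h]; group]
      rw [len_sym]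
    have hβc : Init β c := le_trans' hβαβ hαβc
    have := hm.2.2 _ hβb hβc
    exact sym_ne_one β (le_one_iff.mp this)
  obtain ⟨t, hjt, htj₁⟩ := join_exists hbj₁ hcj₁
  have hαt_le_j : le (sym k F α * t) j := le_compose hαj htj₁
  have hc_le_αt : le c (sym k F α * t) := by
    have hd : le (sym k F α) (sym k F α * t) := le_head_compose hαj htj₁
    have hv : le ((sym k F α)⁻¹ * c) ((sym k F α)⁻¹ * (sym k F α * t)) := by
      rw [show (sym k F α)⁻¹ * (sym k F α * t) = t by group]
      exact hjt.2.1
    have := le_compose hd hv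
    rwa [show sym k F α * ((sym k F α)⁻¹ * c) = c by group] at this
  have hb_le_αt : le b (sym k F α * t) := le_stack hj.1 hαj hαb hjt.1 htj₁
  have hj_le_αt : le j (sym k F α * t) := hj.2.2 _ hb_le_αt hc_le_αt
  have he : sym k F α * t = j := le_antisymm' hαt_le_j hj_le_αt
  have hjt' : IsJoin b ((sym k F α)⁻¹ * c) t := hjt
  have hlen : len ((sym k F α)⁻¹ * c) < n := by
    rw [← hn]; have := init_len hα; omega
  have IH := ih _ hlen hm₁ hjt' rfl
  calc c⁻¹ * j = ((sym k F α)⁻¹ * c)⁻¹ * t := by rw [← he]; group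
  _ = b := IH

lemma diamond {b c d j : Grp k F} (hm : IsMeet' b c d) (hj : IsJoin b c j) :
    c⁻¹ * j = d⁻¹ * b := by
  have hdb := hm.1
  have hdc := hm.2.1
  have hm' := meet_quot hdb hdc hm
  rw [show d⁻¹ * d = 1 by group] at hm'
  have hj' := join_quot hdb hdc hj
  have := diamond_zero hm' hj'
  calc c⁻¹ * j = ((d⁻¹ * c)⁻¹ * (d⁻¹ * j)) := by group
  _ = d⁻¹ * b := this

lemma join_absorb {a b c jbc j : Grp k F} (hj : IsJoin a b j) (hbc : IsJoin b c jbc)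
    (hca : le c a) : IsJoin a jbc j :=
  ⟨hj.1, hbc.2.2 j hj.2.1 (le_trans' hca hj.1),
    fun v hav hjv => hj.2.2 v hav (le_trans' hbc.1 hjv)⟩

/-! ### minimal elements of translates of closed sets -/

lemma minimal_le_base {H : Set (Grp k F)} {x m : Grp k F}
    (hdown : ∀ a ∈ H, ∀ y, le y a → y ∈ H)
    (hm : MinimalIn ((x * ·) '' H) m) : le m x := by
  obtain ⟨h₀, hh₀, hxh₀⟩ := hm.1
  obtain ⟨v, hv⟩ := meet_exists x m
  have hq : le (x⁻¹ * v) (x⁻¹ * m) := by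
    rw [le_iff_quot]
    rw [show (x⁻¹ * v)⁻¹ * (x⁻¹ * m) = v⁻¹ * m by group]
    have h6 := len_meet hv
    have h7 : len (x⁻¹ * v) = len x - len v := len_quot_inv hv.1
    have h8 : len (v⁻¹ * m) = len m - len v := len_quot hv.2.1
    have := le_len_le hv.1
    have := le_len_le hv.2.1
    omega
  have hmem : x⁻¹ * m ∈ H := by
    rwa [show x⁻¹ * m = h₀ by rw [← hxh₀]; group]
  have hvH : x⁻¹ * v ∈ H := hdown _ hmem _ hq
  have hvimg : v ∈ (x * ·) '' H := ⟨x⁻¹ * v, hvH, by show x * (x⁻¹ * v) = v; group⟩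
  have := hm.2 v hvimg hv.2.1
  rw [← this]
  exact hv.1


/-- for closed `H`, `x ≤ y` implies `min(xH) ≤ min(yH)`. -/
theorem stmt9 {k : ℕ} (hk : 1 ≤ k) {F : Set (Sym2 (Fin k))}
    (H : Set (Grp k F)) (hH : ClosedSet H) (x y : Grp k F) (hxy : le x y)
    (m m' : Grp k F)
    (hm : MinimalIn ((x * ·) '' H) m) (hm' : MinimalIn ((y * ·) '' H) m') :
    le m m' := by
  obtain ⟨⟨hne, hdown, hjoin⟩, ⟨hne', hdown', hjoin'⟩⟩ := hH
  have hmx : le m x := minimal_le_base hdown hm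
  have hm'y : le m' y := minimal_le_base hdown hm'
  have hmy : le m y := le_trans' hmx hxy
  obtain ⟨h₀, hh₀, hxh₀⟩ := hm.1
  obtain ⟨h', hh', hyh'⟩ := hm'.1
  have hh₀e : x⁻¹ * m = h₀ := by rw [← hxh₀]; group
  have hh'e : y⁻¹ * m' = h' := by rw [← hyh']; group
  obtain ⟨w, hw⟩ := meet_exists m m'
  have hwy : le w y := le_trans' hw.1 hmy
  have hAy : le (y⁻¹ * m) y⁻¹ := suffix_le hmy
  have hBy : le (y⁻¹ * m') y⁻¹ := suffix_le hm'y
  have hCy : le (y⁻¹ * x) y⁻¹ := suffix_le hxy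
  have hCA : le (y⁻¹ * x) (y⁻¹ * m) := quot_antitone hmx hxy
  -- transfer : the image of the meet w is the join of the images
  have hjw : IsJoin (y⁻¹ * m) (y⁻¹ * m') (y⁻¹ * w) := by
    refine ⟨quot_antitone hw.1 hmy, quot_antitone hw.2.1 hm'y, ?_⟩
    intro v hAv hBv
    obtain ⟨v', hv'⟩ := meet_exists v (y⁻¹ * w)
    have hAv' : le (y⁻¹ * m) v' := hv'.2.2 _ hAv (quot_antitone hw.1 hmy)
    have hBv' : le (y⁻¹ * m') v' := hv'.2.2 _ hBv (quot_antitone hw.2.1 hm'y)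
    have hv'y : le v' y⁻¹ := le_trans' hv'.2.1 (suffix_le hwy)
    have htm : le (y * v') m := by
      have := quot_antitone hAv' hv'y
      rwa [show (y⁻¹)⁻¹ * v' = y * v' by group,
        show (y⁻¹)⁻¹ * (y⁻¹ * m) = m by group] at this
    have htm' : le (y * v') m' := by
      have := quot_antitone hBv' hv'y
      rwa [show (y⁻¹)⁻¹ * v' = y * v' by group,
        show (y⁻¹)⁻¹ * (y⁻¹ * m') = m' by group] at this
    have htw : le (y * v') w := hw.2.2 _ htm htm'
    have hfin : le (y⁻¹ * w) (y⁻¹ * (y * v')) := quot_antitone htw hwy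
    rw [show y⁻¹ * (y * v') = v' by group] at hfin
    exact le_trans' hfin hv'.1
  obtain ⟨jBC, hjBC, hjBCy⟩ := join_exists hBy hCy
  obtain ⟨mBC, hmBC⟩ := meet_exists (y⁻¹ * m') (y⁻¹ * x)
  have hdi : (y⁻¹ * x)⁻¹ * jBC = mBC⁻¹ * (y⁻¹ * m') := diamond hmBC hjBC
  have hjA : IsJoin (y⁻¹ * m) jBC (y⁻¹ * w) := join_absorb hjw hjBC hCA
  have hq := join_quot hCA hjBC.2.1 hjA
  rw [show (y⁻¹ * x)⁻¹ * (y⁻¹ * m) = x⁻¹ * m by group,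
    show (y⁻¹ * x)⁻¹ * (y⁻¹ * w) = x⁻¹ * w by group, hdi, hh₀e] at hq
  -- membership of the second join component in H
  have hqH : mBC⁻¹ * (y⁻¹ * m') ∈ H := by
    have hp : le ((y⁻¹ * m')⁻¹ * mBC) (y⁻¹ * m')⁻¹ := suffix_le hmBC.1
    have hBH : (y⁻¹ * m')⁻¹ ∈ H⁻¹ := by
      rw [Set.mem_inv, inv_inv, hh'e]
      exact hh'
    have hpH : (y⁻¹ * m')⁻¹ * mBC ∈ H⁻¹ := hdown' _ hBH _ hp
    have hfin : ((y⁻¹ * m')⁻¹ * mBC)⁻¹ ∈ H := Set.mem_inv.mp hpH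
    rwa [show ((y⁻¹ * m')⁻¹ * mBC)⁻¹ = mBC⁻¹ * (y⁻¹ * m') by group] at hfin
  have hzH : x⁻¹ * w ∈ H := hjoin h₀ hh₀ _ hqH _ hq
  have hwimg : w ∈ (x * ·) '' H := ⟨x⁻¹ * w, hzH, by show x * (x⁻¹ * w) = w; group⟩
  have hwm := hm.2 w hwimg hw.1
  rw [← hwm]
  exact hw.2.1


end GraphGroupPaper
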